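/- arXiv:1904.10507 — 5 statements merged into one kernel-verified Lean document; each statement's English description precedes it below -/
import Mathlib

section
/- Let d ≥ 1 and let f : ℝ_{>0}^d → ℝ be componentwise subadditive and Lebesgue measurable. Then f is bounded on every compact subset of ℝ_{>0}^d; equivalently, f is bounded on every product of compact intervals [a_1,b_1] × … × [a_d,b_d] with 0 < a_i < b_i for each i. -/
open Filter MeasureTheory Topology

set_option linter.unusedVariables false
set_option linter.unnecessarySeqFocus false

-- splitting lemma
lemma csa_split (d : ℕ) (f : (Fin d → ℝ) → ℝ)
    (hf : ∀ (i : Fin d) (x : Fin d → ℝ) (y : ℝ), (∀ j, 0 < x j) → 0 < y →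
      f (Function.update x i (x i + y)) ≤ f x + f (Function.update x i y))
    (x t : Fin d → ℝ) (ht0 : ∀ i, 0 < t i) (htx : ∀ i, t i < x i) :
    f x ≤ ∑ S : Finset (Fin d), f (fun i => if i ∈ S then t i else x i - t i) := by
  classical
  have key : ∀ A : Finset (Fin d),
      f x ≤ ∑ S ∈ A.powerset,
        f (fun i => if i ∈ A then (if i ∈ S then t i else x i - t i) else x i) := by
    intro A
    induction A using Finset.induction_on with
    | empty =>
      simp
    | @insert j A hj IH =>
      rw [Finset.sum_powerset_insert hj]
      refine IH.trans ?_
      rw [← Finset.sum_add_distrib]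
      refine Finset.sum_le_sum fun S hS => ?_
      rw [Finset.mem_powerset] at hS
      set w : Fin d → ℝ := fun i => if i ∈ A then (if i ∈ S then t i else x i - t i) else x i
        with hw
      have hwj : w j = x j := by simp [hw, hj]
      have hwpos : ∀ i, 0 < w i := by
        intro i
        simp only [hw]
        split_ifs
        · exact ht0 i
        · linarith [htx i]
        · exact lt_trans (ht0 i) (htx i)
      have hp : ∀ i, 0 < (Function.update w j (t j)) i := by
        intro i
        rcases eq_or_ne i j with rfl | h
        · simp [ht0]
        · simp [Function.update_of_ne h, hwpos]
      have hy : (0:ℝ) < x j - t j := by linarith [htx j]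
      have h1 := hf j (Function.update w j (t j)) (x j - t j) hp hy
      have e1 : Function.update (Function.update w j (t j)) j
          (Function.update w j (t j) j + (x j - t j)) = w := by
        funext i
        rcases eq_or_ne i j with rfl | h
        · simp [hwj]
        · simp [Function.update_of_ne h]
      have e2 : Function.update (Function.update w j (t j)) j (x j - t j)
          = Function.update w j (x j - t j) := by
        simp [Function.update_idem]
      rw [e1, e2] at h1
      have e3 : (fun i => if i ∈ insert j A then (if i ∈ insert j S then t i else x i - t i)
          else x i) = Function.update w j (t j) := by
        funext i
        rcases eq_or_ne i j with rfl | h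
        · simp
        · simp only [Function.update_of_ne h, hw, Finset.mem_insert, h, false_or]
      have hjS : j ∉ S := fun hc => hj (hS hc)
      have e4 : (fun i => if i ∈ insert j A then (if i ∈ S then t i else x i - t i)
          else x i) = Function.update w j (x j - t j) := by
        funext k
        rcases eq_or_ne k j with rfl | h
        · simp [hjS]
        · simp only [Function.update_of_ne h, hw, Finset.mem_insert, h, false_or]
      rw [e3, e4]
      linarith [h1]
  have := key Finset.univ
  simpa using this

lemma csa_affine_measure (d : ℕ) (σ v : Fin d → ℝ) (hσ : ∀ i, |σ i| = 1)
    (A : Set (Fin d → ℝ)) :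
    volume ((fun t : Fin d → ℝ => fun i => v i + σ i * t i) ⁻¹' A) = volume A := by
  classical
  set L : (Fin d → ℝ) →ₗ[ℝ] (Fin d → ℝ) := Matrix.toLin' (Matrix.diagonal σ) with hL
  have hLdet : LinearMap.det L = ∏ i, σ i := by
    rw [hL, LinearMap.det_toLin', Matrix.det_diagonal]
  have habs : |LinearMap.det L| = 1 := by
    rw [hLdet, Finset.abs_prod]
    simp [hσ]
  have hdet : LinearMap.det L ≠ 0 := by
    intro h; rw [h] at habs; simp at habs
  have hLapp : ∀ t : Fin d → ℝ, L t = fun i => σ i * t i := by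
    intro t
    funext i
    rw [hL, Matrix.toLin'_apply, Matrix.mulVec_diagonal]
  have hcomp : (fun t : Fin d → ℝ => fun i => v i + σ i * t i)
      = (fun u : Fin d → ℝ => v + u) ∘ L := by
    funext t
    simp [hLapp, Function.comp]
    rfl
  rw [hcomp, Set.preimage_comp]
  rw [Measure.addHaar_preimage_linearMap volume hdet]
  rw [measure_preimage_add]
  have : |((LinearMap.det L)⁻¹)| = 1 := by
    rw [abs_inv, habs]; norm_num
  rw [this]
  simp

lemma csa_upper (d : ℕ) (f : (Fin d → ℝ) → ℝ)
    (hf : ∀ (i : Fin d) (x : Fin d → ℝ) (y : ℝ), (∀ j, 0 < x j) → 0 < y →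
      f (Function.update x i (x i + y)) ≤ f x + f (Function.update x i y))
    (hmeas : AEMeasurable f (volume.restrict {x : Fin d → ℝ | ∀ i, 0 < x i}))
    (csa_split : ∀ (x t : Fin d → ℝ), (∀ i, 0 < t i) → (∀ i, t i < x i) →
      f x ≤ ∑ S : Finset (Fin d), f (fun i => if i ∈ S then t i else x i - t i))
    (csa_affine : ∀ (σ v : Fin d → ℝ), (∀ i, |σ i| = 1) → ∀ A : Set (Fin d → ℝ),
      volume ((fun t : Fin d → ℝ => fun i => v i + σ i * t i) ⁻¹' A) = volume A)
    (A B : ℝ) (hA : 0 < A) (hAB : A ≤ B) :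
    ∃ M : ℝ, ∀ x : Fin d → ℝ, (∀ i, x i ∈ Set.Icc A B) → f x ≤ M := by
  classical
  set O : Set (Fin d → ℝ) := {x | ∀ i, 0 < x i} with hO
  have hOmeas : MeasurableSet O := by
    have : O = Set.univ.pi fun _ : Fin d => Set.Ioi (0:ℝ) := by
      ext x; simp [hO, Set.mem_pi]
    rw [this]
    exact MeasurableSet.univ_pi fun i => measurableSet_Ioi
  set g : (Fin d → ℝ) → ℝ := hmeas.mk f with hgdef
  have hg : Measurable g := hmeas.measurable_mk
  have hfg : f =ᵐ[volume.restrict O] g := hmeas.ae_eq_mk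
  set N : Set (Fin d → ℝ) := {y | f y ≠ g y} ∩ O with hN
  have hNnull : volume N = 0 := by
    have := hfg
    rw [Filter.EventuallyEq, ae_iff] at this
    rw [Measure.restrict_apply' hOmeas] at this
    exact this
  set N' : Set (Fin d → ℝ) := toMeasurable volume N with hN'
  have hN'meas : MeasurableSet N' := measurableSet_toMeasurable _ _
  have hN'null : volume N' = 0 := by rw [hN', measure_toMeasurable]; exact hNnull
  have hNN' : N ⊆ N' := subset_toMeasurable _ _
  -- the base box T and the big box Q
  set T : Set (Fin d → ℝ) := Set.univ.pi fun _ : Fin d => Set.Ioo (0:ℝ) A with hT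
  set Q : Set (Fin d → ℝ) := Set.univ.pi fun _ : Fin d => Set.Ioo (0:ℝ) B with hQ
  have hQmeas : MeasurableSet Q := MeasurableSet.univ_pi fun i => measurableSet_Ioo
  have hTvol : volume T = (ENNReal.ofReal A) ^ d := by
    rw [hT, volume_pi_pi]
    simp [Real.volume_Ioo, hA]
  have hQvol : volume Q ≠ ⊤ := by
    rw [hQ, volume_pi_pi]
    simp only [Real.volume_Ioo, sub_zero, Finset.prod_const, Finset.card_univ,
      Fintype.card_fin]
    exact ENNReal.pow_ne_top ENNReal.ofReal_ne_top
  -- continuity from above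
  set F : ℕ → Set (Fin d → ℝ) := fun n => Q ∩ {u | (n:ℝ) ≤ g u} with hF
  have hFmeas : ∀ n, MeasurableSet (F n) :=
    fun n => hQmeas.inter (hg measurableSet_Ici)
  have hFanti : Antitone F := by
    intro m n hmn u hu
    exact ⟨hu.1, le_trans (show (m:ℝ) ≤ (n:ℝ) from Nat.cast_le.mpr hmn) hu.2⟩
  have hFempty : ⋂ n, F n = ∅ := by
    ext u
    simp only [Set.mem_iInter, Set.mem_empty_iff_false, iff_false]
    intro h
    obtain ⟨n, hn⟩ := exists_nat_gt (g u)
    exact absurd ((h n).2) (not_le.mpr hn)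
  have htend : Tendsto (volume ∘ F) atTop (𝓝 0) := by
    have := tendsto_measure_iInter_atTop (μ := volume)
      (fun n => (hFmeas n).nullMeasurableSet) hFanti
      ⟨0, ne_top_of_le_ne_top hQvol (measure_mono Set.inter_subset_left)⟩
    rw [hFempty] at this
    simpa using this
  set ε : ENNReal := (ENNReal.ofReal A) ^ d / 2 ^ d with hε
  have h2d0 : (2:ENNReal) ^ d ≠ 0 := by positivity
  have h2dtop : (2:ENNReal) ^ d ≠ ⊤ := by
    exact ENNReal.pow_ne_top (by norm_num)
  have hε0 : 0 < ε := by
    rw [hε]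
    apply ENNReal.div_pos
    · apply pow_ne_zero
      simpa using hA
    · exact h2dtop
  obtain ⟨n₀, hn₀⟩ : ∃ n₀ : ℕ, volume (F n₀) < ε := by
    have := htend.eventually_lt_const hε0
    exact this.exists
  refine ⟨2 ^ d * n₀, fun x hx => ?_⟩
  by_contra hcon
  push_neg at hcon
  -- the maps φ_S
  set φ : Finset (Fin d) → (Fin d → ℝ) → (Fin d → ℝ) :=
    fun S t => fun i => if i ∈ S then t i else x i - t i with hφ
  have hφaff : ∀ S : Finset (Fin d), ∀ A : Set (Fin d → ℝ),
      volume (φ S ⁻¹' A) = volume A := by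
    intro S A
    have : φ S = fun t : Fin d → ℝ => fun i =>
        (if i ∈ S then 0 else x i) + (if i ∈ S then (1:ℝ) else -1) * t i := by
      funext t i
      by_cases h : i ∈ S <;> simp [hφ, h] <;> ring
    rw [this]
    apply csa_affine
    intro i
    by_cases h : i ∈ S <;> simp [h]
  -- bad set
  set Bad : Set (Fin d → ℝ) := ⋃ S : Finset (Fin d), φ S ⁻¹' N' with hBad
  have hBadnull : volume Bad = 0 := by
    rw [hBad]
    refine measure_iUnion_null fun S => ?_
    rw [hφaff S N']
    exact hN'null
  -- key inclusion
  have hincl : T \ Bad ⊆ ⋃ S : Finset (Fin d), φ S ⁻¹' (F n₀) := by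
    intro t ⟨htT, htBad⟩
    rw [hT, Set.mem_pi] at htT
    have ht0 : ∀ i, 0 < t i := fun i => (htT i trivial).1
    have htA : ∀ i, t i < A := fun i => (htT i trivial).2
    have htx : ∀ i, t i < x i := fun i => lt_of_lt_of_le (htA i) (hx i).1
    have hsplit := csa_split x t ht0 htx
    -- each φ S t is in the orthant and f = g there
    have hfgS : ∀ S : Finset (Fin d), f (φ S t) = g (φ S t) := by
      intro S
      have hmemO : φ S t ∈ O := by
        intro i
        simp only [hφ]
        split_ifs
        · exact ht0 i
        · linarith [htx i]
      by_contra hne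
      exact htBad (Set.mem_iUnion.mpr ⟨S, hNN' ⟨hne, hmemO⟩⟩)
    have hsum : (2:ℝ) ^ d * n₀ < ∑ S : Finset (Fin d), g (φ S t) := by
      calc (2:ℝ) ^ d * n₀ < f x := hcon
        _ ≤ ∑ S : Finset (Fin d), f (φ S t) := hsplit
        _ = ∑ S : Finset (Fin d), g (φ S t) := Finset.sum_congr rfl fun S _ => hfgS S
    -- some S has g (φ S t) ≥ n₀
    have : ∃ S : Finset (Fin d), (n₀:ℝ) ≤ g (φ S t) := by
      by_contra hall
      push_neg at hall
      have hlt : ∑ S : Finset (Fin d), g (φ S t) <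
          ∑ _S : Finset (Fin d), (n₀:ℝ) := by
        apply Finset.sum_lt_sum_of_nonempty
        · exact Finset.univ_nonempty
        · intro S _; exact hall S
      rw [Finset.sum_const, Finset.card_univ, Fintype.card_finset, Fintype.card_fin,
        nsmul_eq_mul] at hlt
      push_cast at hlt
      linarith
    obtain ⟨S, hS⟩ := this
    refine Set.mem_iUnion.mpr ⟨S, ?_, hS⟩
    -- φ S t ∈ Q
    rw [hQ, Set.mem_pi]
    intro i _
    simp only [hφ]
    constructor
    · split_ifs
      · exact ht0 i
      · linarith [htx i]
    · split_ifs
      · exact lt_of_lt_of_le (htA i) hAB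
      · have := (hx i).2; linarith [ht0 i]
  -- measure contradiction
  have hTle : volume T ≤ volume Bad + ∑ S : Finset (Fin d), volume (φ S ⁻¹' (F n₀)) := by
    calc volume T ≤ volume (Bad ∪ ⋃ S : Finset (Fin d), φ S ⁻¹' (F n₀)) := by
          apply measure_mono
          intro t ht
          by_cases h : t ∈ Bad
          · exact Or.inl h
          · exact Or.inr (hincl ⟨ht, h⟩)
      _ ≤ volume Bad + volume (⋃ S : Finset (Fin d), φ S ⁻¹' (F n₀)) := measure_union_le _ _
      _ ≤ volume Bad + ∑ S : Finset (Fin d), volume (φ S ⁻¹' (F n₀)) := by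
          gcongr
          exact measure_iUnion_fintype_le _ _
  rw [hBadnull, zero_add] at hTle
  have hsum2 : ∑ S : Finset (Fin d), volume (φ S ⁻¹' (F n₀)) = 2 ^ d * volume (F n₀) := by
    have : ∀ S : Finset (Fin d), volume (φ S ⁻¹' (F n₀)) = volume (F n₀) :=
      fun S => hφaff S _
    rw [Finset.sum_congr rfl fun S _ => this S, Finset.sum_const, Finset.card_univ,
      Fintype.card_finset, Fintype.card_fin, nsmul_eq_mul]
    norm_cast
  rw [hsum2, hTvol] at hTle
  have : (2:ENNReal) ^ d * volume (F n₀) < 2 ^ d * ε :=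
    ENNReal.mul_lt_mul_right h2d0 h2dtop hn₀
  rw [hε, ENNReal.mul_div_cancel h2d0 h2dtop] at this
  exact absurd (lt_of_le_of_lt hTle this) (lt_irrefl _)

theorem csa_main
    (d : ℕ) (hd : 1 ≤ d) (f : (Fin d → ℝ) → ℝ)
    (hf : ∀ (i : Fin d) (x : Fin d → ℝ) (y : ℝ), (∀ j, 0 < x j) → 0 < y →
      f (Function.update x i (x i + y)) ≤ f x + f (Function.update x i y))
    (hmeas : AEMeasurable f (volume.restrict {x : Fin d → ℝ | ∀ i, 0 < x i}))
    (csa_split : ∀ (x t : Fin d → ℝ), (∀ i, 0 < t i) → (∀ i, t i < x i) →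
      f x ≤ ∑ S : Finset (Fin d), f (fun i => if i ∈ S then t i else x i - t i))
    (csa_upper : ∀ (A B : ℝ), 0 < A → A ≤ B →
      ∃ M : ℝ, ∀ x : Fin d → ℝ, (∀ i, x i ∈ Set.Icc A B) → f x ≤ M) :
    ∀ K : Set (Fin d → ℝ), K ⊆ {x | ∀ i, 0 < x i} → IsCompact K →
      ∃ M : ℝ, ∀ x ∈ K, |f x| ≤ M := by
  classical
  intro K hsub hK
  rcases K.eq_empty_or_nonempty with rfl | ⟨x₀, hx₀⟩
  · exact ⟨0, fun x hx => absurd hx (Set.notMem_empty x)⟩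
  haveI : Nonempty (Fin d) := ⟨⟨0, hd⟩⟩
  set C : Fin d → Set ℝ := fun i => (fun x : Fin d → ℝ => x i) '' K with hC
  have hCcomp : ∀ i, IsCompact (C i) := fun i => hK.image (continuous_apply i)
  have hCne : ∀ i, (C i).Nonempty := fun i => ⟨x₀ i, ⟨x₀, hx₀, rfl⟩⟩
  set A : ℝ := Finset.univ.inf' Finset.univ_nonempty (fun i => sInf (C i)) with hAdef
  set B : ℝ := Finset.univ.sup' Finset.univ_nonempty (fun i => sSup (C i)) with hBdef
  have hA0 : 0 < A := by
    rw [hAdef, Finset.lt_inf'_iff]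
    intro i _
    have hmem := (hCcomp i).sInf_mem (hCne i)
    obtain ⟨x, hxK, hxe⟩ := hmem
    rw [← hxe]
    exact hsub hxK i
  have hlow : ∀ x ∈ K, ∀ i, A ≤ x i := by
    intro x hx i
    have h1 : A ≤ sInf (C i) := Finset.inf'_le _ (Finset.mem_univ i)
    exact h1.trans (csInf_le (hCcomp i).bddBelow ⟨x, hx, rfl⟩)
  have hhigh : ∀ x ∈ K, ∀ i, x i ≤ B := by
    intro x hx i
    have h1 : sSup (C i) ≤ B := by
      rw [hBdef]; exact Finset.le_sup' (fun i => sSup (C i)) (Finset.mem_univ i)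
    exact (le_csSup (hCcomp i).bddAbove ⟨x, hx, rfl⟩).trans h1
  have hAB : A ≤ B := by
    have i0 : Fin d := ⟨0, hd⟩
    exact (hlow x₀ hx₀ i0).trans (hhigh x₀ hx₀ i0)
  set B' : ℝ := 2 * B - A with hB'
  have hBB' : B ≤ B' := by rw [hB']; linarith
  obtain ⟨M₁, hM₁⟩ := csa_upper A B' hA0 (hAB.trans hBB')
  set M' : ℝ := max M₁ 0 with hM'
  set z : Fin d → ℝ := fun _ => 2 * B with hz
  set c : ℕ := ((Finset.univ : Finset (Finset (Fin d))).erase Finset.univ).card with hc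
  refine ⟨max M' (c * M' - f z), fun x hx => ?_⟩
  have hxIcc : ∀ i, x i ∈ Set.Icc A B := fun i => ⟨hlow x hx i, hhigh x hx i⟩
  have hfx_up : f x ≤ M' := by
    refine le_trans (hM₁ x fun i => ⟨(hxIcc i).1, (hxIcc i).2.trans hBB'⟩) (le_max_left _ _)
  -- lower bound via splitting of f z
  have hx0 : ∀ i, 0 < x i := fun i => lt_of_lt_of_le hA0 (hxIcc i).1
  have hxz : ∀ i, x i < z i := by
    intro i
    have := (hxIcc i).2
    have hB0 : 0 < B := lt_of_lt_of_le hA0 hAB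
    simp only [hz]
    linarith
  have hsplit := csa_split z x hx0 hxz
  set y : Finset (Fin d) → (Fin d → ℝ) :=
    fun S => fun i => if i ∈ S then x i else z i - x i with hy
  have hyuniv : y Finset.univ = x := by
    funext i; simp [hy]
  have hybound : ∀ S : Finset (Fin d), f (y S) ≤ M₁ := by
    intro S
    apply hM₁
    intro i
    simp only [hy, hz]
    split_ifs
    · exact ⟨(hxIcc i).1, (hxIcc i).2.trans hBB'⟩
    · constructor
      · have h2 := (hxIcc i).2; linarith [hAB]
      · have h1 := (hxIcc i).1; rw [hB']; linarith
  have hsum_erase : ∑ S ∈ (Finset.univ : Finset (Finset (Fin d))).erase Finset.univ, f (y S)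
      ≤ c * M' := by
    calc ∑ S ∈ (Finset.univ : Finset (Finset (Fin d))).erase Finset.univ, f (y S)
        ≤ ∑ _S ∈ (Finset.univ : Finset (Finset (Fin d))).erase Finset.univ, M' :=
          Finset.sum_le_sum fun S _ => (hybound S).trans (le_max_left _ _)
      _ = c * M' := by rw [Finset.sum_const, hc, nsmul_eq_mul]
  have hfz : f z ≤ c * M' + f x := by
    have hrw : ∑ S : Finset (Fin d), f (y S)
        = (∑ S ∈ (Finset.univ : Finset (Finset (Fin d))).erase Finset.univ, f (y S))
          + f (y Finset.univ) :=
      (Finset.sum_erase_add _ _ (Finset.mem_univ _)).symm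
    have : f z ≤ ∑ S : Finset (Fin d), f (y S) := hsplit
    rw [hrw, hyuniv] at this
    linarith [hsum_erase, this]
  rw [abs_le]
  constructor
  · have : -(max M' (c * M' - f z)) ≤ -(c * M' - f z) := by
      simp only [neg_le_neg_iff]
      exact le_max_right _ _
    linarith [hfz]
  · exact hfx_up.trans (le_max_left _ _)

/-- A componentwise subadditive, Lebesgue-measurable function of `d` positive real
variables is bounded on every compact subset of the open positive orthant
(equivalently, on every product of compact subintervals of `(0,∞)`). -/
theorem componentwise_subadditive_bounded_on_compacts_pos
    (d : ℕ) (hd : 1 ≤ d) (f : (Fin d → ℝ) → ℝ)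
    (hf : ∀ (i : Fin d) (x : Fin d → ℝ) (y : ℝ), (∀ j, 0 < x j) → 0 < y →
      f (Function.update x i (x i + y)) ≤ f x + f (Function.update x i y))
    (hmeas : AEMeasurable f (volume.restrict {x : Fin d → ℝ | ∀ i, 0 < x i})) :
    ∀ K : Set (Fin d → ℝ), K ⊆ {x | ∀ i, 0 < x i} → IsCompact K →
      ∃ M : ℝ, ∀ x ∈ K, |f x| ≤ M :=
  csa_main d hd f hf hmeas (csa_split d f hf)
    (csa_upper d f hf hmeas (csa_split d f hf) (csa_affine_measure d))
end

section
/- Let d ≥ 1 and let f : ℝ^d → ℝ be componentwise subadditive (in each variable, the variable now ranging over all of ℝ) and Lebesgue measurable. Then f is bounded on every compact subset of ℝ^d. -/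
open Filter MeasureTheory Topology

/-- The "mixing" map: coordinates from `x` or reflected `z - x` according to pattern `S`. -/
private def mixMap {d : ℕ} (z : Fin d → ℝ) (S : Fin d → Bool) (x : Fin d → ℝ) : Fin d → ℝ :=
  fun i => if S i then x i else z i - x i

private lemma mixMap_measurePreserving {d : ℕ} (z : Fin d → ℝ) (S : Fin d → Bool) :
    MeasurePreserving (mixMap z S) (volume : Measure (Fin d → ℝ)) volume := by
  have h : ∀ i : Fin d,
      MeasurePreserving (fun t : ℝ => if S i then t else z i - t) volume volume := by
    intro i
    by_cases h : S i
    · convert MeasurePreserving.id (volume : Measure ℝ) using 1; funext t; simp [h]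
    · simpa [h] using Measure.measurePreserving_sub_left (volume : Measure ℝ) (z i)
  exact volume_preserving_pi h

private lemma subadd_upper {d : ℕ} (f : (Fin d → ℝ) → ℝ)
    (hf : ∀ (i : Fin d) (x : Fin d → ℝ) (y : ℝ),
      f (Function.update x i (x i + y)) ≤ f x + f (Function.update x i y))
    (hmeas : AEMeasurable f volume) (R : ℝ) (hR : 0 < R) :
    ∃ C : ℝ, ∀ z : Fin d → ℝ, (∀ i, |z i| ≤ R) → f z ≤ C := by
  classical
  set g := hmeas.mk f with hgdef
  have hg : Measurable g := hmeas.measurable_mk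
  have hN0 : volume {x : Fin d → ℝ | f x ≠ g x} = 0 := by
    have := hmeas.ae_eq_mk
    rwa [Filter.EventuallyEq, ae_iff] at this
  set N := toMeasurable volume {x : Fin d → ℝ | f x ≠ g x} with hNdef
  have hNm : MeasurableSet N := measurableSet_toMeasurable _ _
  have hNvol : volume N = 0 := by rw [hNdef, measure_toMeasurable]; exact hN0
  set Box : Set (Fin d → ℝ) := Set.pi Set.univ (fun _ => Set.Icc (-R) R) with hBoxdef
  have hBoxm : MeasurableSet Box := MeasurableSet.univ_pi fun _ => measurableSet_Icc
  have hBoxvol : volume Box ≠ ⊤ := by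
    rw [hBoxdef, volume_pi_pi]
    simp only [Real.volume_Icc, Finset.prod_const, Finset.card_univ, Fintype.card_fin]
    exact ENNReal.pow_ne_top ENNReal.ofReal_ne_top
  set A : ℕ → Set (Fin d → ℝ) := fun n => Box \ {x | g x ≤ (n : ℝ)} with hAdef
  have hAm : ∀ n, MeasurableSet (A n) := fun n => hBoxm.diff (hg measurableSet_Iic)
  have hAanti : Antitone A := by
    intro n m hnm
    refine Set.diff_subset_diff_right fun x hx => ?_
    simp only [Set.mem_setOf_eq] at hx ⊢
    exact le_trans hx (by exact_mod_cast hnm)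
  have hAint : ⋂ n, A n = ∅ := by
    ext x
    simp only [Set.mem_iInter, Set.mem_empty_iff_false, iff_false, not_forall]
    obtain ⟨n, hn⟩ := exists_nat_ge (g x)
    exact ⟨n, fun h => h.2 hn⟩
  have htend : Tendsto (fun n => volume (A n)) atTop (𝓝 0) := by
    have := tendsto_measure_iInter_atTop (μ := volume)
      (fun n => (hAm n).nullMeasurableSet) hAanti
      ⟨0, ne_top_of_le_ne_top hBoxvol (measure_mono Set.diff_subset)⟩
    rwa [hAint, measure_empty] at this
  set δ : ENNReal := (ENNReal.ofReal R) ^ d / 2 ^ d with hδdef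
  have h2d : (2 : ENNReal) ^ d ≠ ⊤ := ENNReal.pow_ne_top ENNReal.ofNat_ne_top
  have h2d0 : (2 : ENNReal) ^ d ≠ 0 := by positivity
  have hδ0 : 0 < δ :=
    ENNReal.div_pos (pow_ne_zero d (ENNReal.ofReal_pos.2 hR).ne') h2d
  obtain ⟨n, hn⟩ : ∃ n, volume (A n) < δ := (htend.eventually_lt_const hδ0).exists
  set W := A n ∪ N with hWdef
  have hWm : MeasurableSet W := (hAm n).union hNm
  have hWvol : volume W < δ := by
    refine lt_of_le_of_lt (le_trans (measure_union_le _ _) ?_) hn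
    rw [hNvol, add_zero]
  refine ⟨2 ^ d * (n : ℝ), fun z hz => ?_⟩
  set l : Fin d → ℝ := fun i => max (-R) (z i - R) with hldef
  set I : Set (Fin d → ℝ) := Set.pi Set.univ (fun i => Set.Icc (l i) (l i + R)) with hIdef
  have hIvol : volume I = (ENNReal.ofReal R) ^ d := by
    rw [hIdef, volume_pi_pi]
    simp only [Real.volume_Icc, add_sub_cancel_left, Finset.prod_const, Finset.card_univ,
      Fintype.card_fin]
  set Bad : Set (Fin d → ℝ) := ⋃ S : Fin d → Bool, (mixMap z S) ⁻¹' W with hBaddef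
  have hBadvol : volume Bad < volume I := by
    have heq : ∀ S : Fin d → Bool, volume ((mixMap z S) ⁻¹' W) = volume W := fun S =>
      (mixMap_measurePreserving z S).measure_preimage hWm.nullMeasurableSet
    calc volume Bad ≤ ∑ S : Fin d → Bool, volume ((mixMap z S) ⁻¹' W) :=
          measure_iUnion_fintype_le _ _
      _ = 2 ^ d * volume W := by
          simp only [heq, Finset.sum_const, Finset.card_univ, Fintype.card_fun,
            Fintype.card_bool, Fintype.card_fin, nsmul_eq_mul, Nat.cast_pow, Nat.cast_ofNat]
      _ < 2 ^ d * δ := (ENNReal.mul_lt_mul_iff_right h2d0 h2d).2 hWvol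
      _ = volume I := by
          rw [hIvol, hδdef]
          exact ENNReal.mul_div_cancel h2d0 h2d
  obtain ⟨x, hxI, hxBad⟩ := Set.not_subset.1
    (fun h => absurd (measure_mono h) (not_le.2 hBadvol))
  have hxco : ∀ i, l i ≤ x i ∧ x i ≤ l i + R := by
    intro i
    have := Set.mem_univ_pi.1 hxI i
    exact ⟨this.1, this.2⟩
  have hl_le : ∀ i, l i ≤ z i := fun i =>
    max_le (neg_le_of_abs_le (hz i)) (by linarith)
  have hl_nonpos : ∀ i, l i ≤ 0 := fun i =>
    max_le (by linarith) (by linarith [(abs_le.1 (hz i)).2])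
  have hl_ge : ∀ i, z i - R ≤ l i := fun i => le_max_right _ _
  have hmix : ∀ v : Fin d → ℝ, (∀ i, v i = x i ∨ v i = z i - x i) → f v ≤ (n : ℝ) := by
    intro v hv
    set S : Fin d → Bool := fun i => decide (v i = x i) with hSdef
    have hveq : mixMap z S x = v := by
      funext i
      by_cases h : v i = x i
      · simp [mixMap, hSdef, h]
      · have h' : v i = z i - x i := (hv i).resolve_left h
        have hb : ¬ (S i = true) := by simp [hSdef, h]
        simp only [mixMap, if_neg hb]
        exact h'.symm
    have hnotW : mixMap z S x ∉ W := fun hmem => hxBad (Set.mem_iUnion.2 ⟨S, hmem⟩)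
    have hBoxmem : mixMap z S x ∈ Box := by
      refine Set.mem_univ_pi.2 fun i => ?_
      rcases hxco i with ⟨h1, h2⟩
      by_cases h : S i = true
      · have hmm : mixMap z S x i = x i := by simp [mixMap, h]
        rw [hmm]
        exact ⟨le_trans (le_max_left _ _) h1, by linarith [hl_nonpos i]⟩
      · have hmm : mixMap z S x i = z i - x i := by simp [mixMap, h]
        rw [hmm]
        exact ⟨by linarith [hl_le i], by linarith [hl_ge i]⟩
    have h1 : mixMap z S x ∉ A n := fun h => hnotW (Or.inl h)
    have h2 : mixMap z S x ∉ N := fun h => hnotW (Or.inr h)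
    have hgle : g (mixMap z S x) ≤ (n : ℝ) := by
      by_contra hc
      exact h1 ⟨hBoxmem, hc⟩
    have hfgx : f (mixMap z S x) = g (mixMap z S x) := by
      by_contra hc
      exact h2 (subset_toMeasurable _ _ hc)
    rw [← hveq, hfgx]
    exact hgle
  have claim : ∀ k : ℕ, ∀ v : Fin d → ℝ,
      (∀ i : Fin d, ((i : ℕ) < d - k → (v i = x i ∨ v i = z i - x i)) ∧
        (d - k ≤ (i : ℕ) → v i = z i)) →
      f v ≤ 2 ^ k * (n : ℝ) := by
    intro k
    induction k with
    | zero =>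
      intro v hv
      have hfv : f v ≤ (n : ℝ) := hmix v fun i => (hv i).1 (by have := i.isLt; omega)
      simpa using hfv
    | succ k ih =>
      intro v hv
      by_cases hkd : d ≤ k
      · have h1 := ih v fun i =>
          ⟨fun h => (hv i).1 (by omega), fun h => (hv i).2 (by omega)⟩
        have h2 : (2 : ℝ) ^ k * n ≤ 2 ^ (k + 1) * n := by
          have h3 : (2 : ℝ) ^ k ≤ 2 ^ (k + 1) :=
            pow_le_pow_right₀ (by norm_num) (Nat.le_succ k)
          have h4 : (0 : ℝ) ≤ (n : ℝ) := Nat.cast_nonneg n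
          nlinarith
        linarith
      · push_neg at hkd
        have hidx : d - (k + 1) < d := by omega
        set i₀ : Fin d := ⟨d - (k + 1), hidx⟩ with hi₀
        have hi0val : (i₀ : ℕ) = d - (k + 1) := rfl
        have hvz : v i₀ = z i₀ := (hv i₀).2 (le_of_eq hi0val.symm)
        have key := hf i₀ (Function.update v i₀ (x i₀)) (z i₀ - x i₀)
        rw [Function.update_self] at key
        have e1 : Function.update (Function.update v i₀ (x i₀)) i₀ (x i₀ + (z i₀ - x i₀))
            = v := by
          rw [Function.update_idem]
          have hxz : x i₀ + (z i₀ - x i₀) = z i₀ := by ring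
          rw [hxz, ← hvz, Function.update_eq_self]
        have e2 : Function.update (Function.update v i₀ (x i₀)) i₀ (z i₀ - x i₀)
            = Function.update v i₀ (z i₀ - x i₀) := by rw [Function.update_idem]
        rw [e1, e2] at key
        have cond : ∀ w : ℝ, (w = x i₀ ∨ w = z i₀ - x i₀) → ∀ i : Fin d,
            ((i : ℕ) < d - k →
              (Function.update v i₀ w i = x i ∨ Function.update v i₀ w i = z i - x i)) ∧
            (d - k ≤ (i : ℕ) → Function.update v i₀ w i = z i) := by
          intro w hw i
          by_cases hii : i = i₀
          · subst hii
            rw [Function.update_self]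
            refine ⟨fun _ => hw, fun h => ?_⟩
            rw [hi0val] at h
            omega
          · rw [Function.update_of_ne hii]
            have hne : (i : ℕ) ≠ d - (k + 1) := fun h => hii (Fin.ext (h.trans hi0val.symm))
            exact ⟨fun h => (hv i).1 (by omega), fun h => (hv i).2 (by omega)⟩
        have hA := ih _ (cond (x i₀) (Or.inl rfl))
        have hB := ih _ (cond (z i₀ - x i₀) (Or.inr rfl))
        calc f v ≤ f (Function.update v i₀ (x i₀)) + f (Function.update v i₀ (z i₀ - x i₀)) :=
              key
          _ ≤ 2 ^ k * (n : ℝ) + 2 ^ k * (n : ℝ) := add_le_add hA hB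
          _ = 2 ^ (k + 1) * (n : ℝ) := by ring
  exact claim d z fun i => ⟨fun h => absurd h (by omega), fun _ => rfl⟩


private def zeroOut {d : ℕ} (k : ℕ) (x : Fin d → ℝ) : Fin d → ℝ :=
  fun i => if (i : ℕ) < k then 0 else x i

/-- A componentwise subadditive (in each variable ranging over all of `ℝ`),
Lebesgue-measurable function `f : ℝ^d → ℝ` is bounded on every compact subset
of `ℝ^d`. -/
theorem componentwise_subadditive_bounded_on_compacts
    (d : ℕ) (hd : 1 ≤ d) (f : (Fin d → ℝ) → ℝ)
    (hf : ∀ (i : Fin d) (x : Fin d → ℝ) (y : ℝ),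
      f (Function.update x i (x i + y)) ≤ f x + f (Function.update x i y))
    (hmeas : AEMeasurable f volume) :
    ∀ K : Set (Fin d → ℝ), IsCompact K → ∃ M : ℝ, ∀ x ∈ K, |f x| ≤ M := by
  intro K hK
  obtain ⟨R, hRK⟩ := hK.isBounded.subset_closedBall 0
  set R' : ℝ := max R 1 with hR'def
  have hR' : (0 : ℝ) < R' := lt_of_lt_of_le one_pos (le_max_right _ _)
  have hKR : ∀ x ∈ K, ∀ i, |x i| ≤ R' := by
    intro x hx i
    have h1 : ‖x‖ ≤ R := by
      have := hRK hx
      rwa [Metric.mem_closedBall, dist_zero_right] at this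
    calc |x i| = ‖x i‖ := rfl
      _ ≤ ‖x‖ := norm_le_pi_norm x i
      _ ≤ R' := le_trans h1 (le_max_left _ _)
  obtain ⟨C, hC⟩ := subadd_upper f hf hmeas R' hR'
  set C' : ℝ := max C 0 with hC'def
  have hC'0 : (0 : ℝ) ≤ C' := le_max_right _ _
  have hCb : ∀ z : Fin d → ℝ, (∀ i, |z i| ≤ R') → f z ≤ C' := fun z hz =>
    le_trans (hC z hz) (le_max_left _ _)
  -- zeroing out the first k coordinates
  have claim : ∀ k : ℕ, ∀ x : Fin d → ℝ, (∀ i, |x i| ≤ R') →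
      f (zeroOut k x) ≤ f x + k * C' := by
    intro k
    induction k with
    | zero =>
      intro x hx
      have : zeroOut 0 x = x := by
        funext i
        simp [zeroOut]
      rw [this]
      simp
    | succ k ih =>
      intro x hx
      by_cases hkd : d ≤ k
      · have heq : zeroOut (k + 1) x = zeroOut k x := by
          funext i
          have := i.isLt
          simp only [zeroOut]
          rw [if_pos (by omega), if_pos (by omega)]
        rw [heq]
        have := ih x hx
        push_cast
        nlinarith
      · push_neg at hkd
        set i₀ : Fin d := ⟨k, hkd⟩ with hi₀
        have hzi : zeroOut k x i₀ = x i₀ := by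
          simp only [zeroOut]
          rw [if_neg (by simp [hi₀])]
        have key := hf i₀ (zeroOut k x) (-(x i₀))
        rw [hzi] at key
        have e1 : Function.update (zeroOut k x) i₀ (x i₀ + -(x i₀)) = zeroOut (k + 1) x := by
          funext i
          by_cases hii : i = i₀
          · subst hii
            rw [Function.update_self]
            simp only [zeroOut]
            rw [if_pos (by simp [hi₀])]
            ring
          · rw [Function.update_of_ne hii]
            have hne : (i : ℕ) ≠ k := fun h => hii (Fin.ext h)
            simp only [zeroOut]
            by_cases hik : (i : ℕ) < k
            · rw [if_pos hik, if_pos (by omega)]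
            · rw [if_neg hik, if_neg (by omega)]
        rw [e1] at key
        have hub : f (Function.update (zeroOut k x) i₀ (-(x i₀))) ≤ C' := by
          refine hCb _ fun i => ?_
          by_cases hii : i = i₀
          · subst hii
            rw [Function.update_self, abs_neg]
            exact hx i₀
          · rw [Function.update_of_ne hii]
            simp only [zeroOut]
            by_cases hik : (i : ℕ) < k
            · rw [if_pos hik]
              simpa using hR'.le
            · rw [if_neg hik]
              exact hx i
        have := ih x hx
        push_cast
        linarith
  refine ⟨max C' ((d : ℝ) * C' - f (fun _ => 0)), fun x hx => ?_⟩
  rw [abs_le]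
  constructor
  · have hz : zeroOut d x = fun _ => (0 : ℝ) := by
      funext i
      simp only [zeroOut]
      rw [if_pos i.isLt]
    have h1 := claim d x (hKR x hx)
    rw [hz] at h1
    have : (d : ℝ) * C' - f (fun _ => 0) ≤ max C' ((d : ℝ) * C' - f (fun _ => 0)) :=
      le_max_right _ _
    linarith
  · exact le_trans (hCb x (hKR x hx)) (le_max_left _ _)
end

section
/- Let d ≥ 1 and let f : ℝ_{>0}^d → ℝ be componentwise subadditive and Lebesgue measurable. For positive reals t_1,…,t_d and a real k, let V_{t_1,…,t_d,k} = {(x_1,…,x_d) : 0 < x_i < t_i for all i, and f(x_1,…,x_d) ≥ k}. Then for every t_1,…,t_d > 0, the d-dimensional Lebesgue measure of V_{t_1,…,t_d, f(t_1,…,t_d)/2^d} is at least (t_1⋯t_d)/2^d. -/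
open Filter MeasureTheory Topology


section aux
variable {d : ℕ} (t : Fin d → ℝ)

noncomputable def reflW (S : Finset (Fin d)) : (Fin d → ℝ) ≃ᵐ (Fin d → ℝ) :=
  MeasurableEquiv.piCongrRight
    (fun i => if i ∈ S then MeasurableEquiv.subLeft (t i) else MeasurableEquiv.refl ℝ)

lemma reflW_apply (S : Finset (Fin d)) (x : Fin d → ℝ) (i : Fin d) :
    reflW t S x i = if i ∈ S then t i - x i else x i := by
  show (if i ∈ S then MeasurableEquiv.subLeft (t i) else MeasurableEquiv.refl ℝ) (x i) = _
  split <;> simp [MeasurableEquiv.subLeft] <;> rfl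

lemma reflW_mp (S : Finset (Fin d)) : MeasurePreserving (reflW t S) volume volume := by
  have h := measurePreserving_pi (fun _ : Fin d => (volume : Measure ℝ)) (fun _ => volume)
    (f := fun i => ⇑(if i ∈ S then MeasurableEquiv.subLeft (t i) else MeasurableEquiv.refl ℝ))
    (fun i => by
      by_cases h : i ∈ S
      · simp only [h, ↓reduceIte]; exact
          MeasureTheory.Measure.measurePreserving_sub_left (volume : Measure ℝ) (t i)
      · simp only [h, ↓reduceIte]; exact MeasurePreserving.id (volume : Measure ℝ))
  rw [← MeasureTheory.volume_pi] at h
  exact h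

end aux

lemma key_sum {d : ℕ} (f : (Fin d → ℝ) → ℝ)
    (hf : ∀ (i : Fin d) (x : Fin d → ℝ) (y : ℝ), (∀ j, 0 < x j) → 0 < y →
      f (Function.update x i (x i + y)) ≤ f x + f (Function.update x i y))
    (t : Fin d → ℝ) :
    ∀ (F : Finset (Fin d)) (x : Fin d → ℝ), (∀ i, 0 < x i ∧ x i < t i) →
      f (fun i => if i ∈ F then t i else x i) ≤
        ∑ S ∈ F.powerset, f (fun i => if i ∈ S then t i - x i else x i) := by
  intro F
  induction F using Finset.induction with
  | empty => intro x hx; simp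
  | insert a F hi ih =>
    intro x hx
    set z : Fin d → ℝ := fun i => if i ∈ F then t i else x i with hz
    have hzpos : ∀ j, 0 < z j := fun j => by
      simp only [hz]; split
      · exact lt_trans (hx j).1 (hx j).2
      · exact (hx j).1
    have hya : 0 < t a - x a := sub_pos.2 (hx a).2
    have hza : z a = x a := by simp [hz, hi]
    have h1 : (fun i => if i ∈ insert a F then t i else x i)
        = Function.update z a (z a + (t a - x a)) := by
      funext j
      rcases eq_or_ne j a with rfl | hj
      · simp [hza]
      · simp [Function.update_of_ne hj, hz, hj]
    have h2 : Function.update z a (t a - x a)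
        = fun i => if i ∈ F then t i else (Function.update x a (t a - x a)) i := by
      funext j
      rcases eq_or_ne j a with rfl | hj
      · simp [hi]
      · simp [Function.update_of_ne hj, hz]
    set x' := Function.update x a (t a - x a) with hx'
    have hx'h : ∀ i, 0 < x' i ∧ x' i < t i := fun i => by
      rcases eq_or_ne i a with rfl | hij
      · simp only [hx', Function.update_self]
        exact ⟨hya, by linarith [(hx i).1]⟩
      · simp only [hx', Function.update_of_ne hij]; exact hx i
    have step := hf a z (t a - x a) hzpos hya
    rw [h1]
    refine le_trans step ?_
    rw [h2]
    have ihx := ih x hx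
    have ihx' := ih x' hx'h
    have hmap : ∀ S ∈ F.powerset, (fun i => if i ∈ S then t i - x' i else x' i)
        = fun i => if i ∈ insert a S then t i - x i else x i := by
      intro S hS
      have haS : a ∉ S := fun h => hi (Finset.mem_powerset.1 hS h)
      funext j
      rcases eq_or_ne j a with rfl | hj
      · simp [haS, hx']
      · simp [hx', Function.update_of_ne hj, hj]
    rw [Finset.sum_powerset_insert hi]
    refine add_le_add ihx (le_trans ihx' (le_of_eq ?_))
    exact Finset.sum_congr rfl fun S hS => by rw [hmap S hS]

/-- For a componentwise subadditive, Lebesgue-measurable function `f` on the positive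
orthant of `ℝ^d` and any `t₁,…,t_d > 0`, the level set
`V = {x | 0 < xᵢ < tᵢ for all i, f x ≥ f(t₁,…,t_d)/2^d}` has `d`-dimensional Lebesgue
measure at least `(t₁⋯t_d)/2^d`. -/
theorem measure_level_set_componentwise_subadditive
    (d : ℕ) (hd : 1 ≤ d) (f : (Fin d → ℝ) → ℝ)
    (hf : ∀ (i : Fin d) (x : Fin d → ℝ) (y : ℝ), (∀ j, 0 < x j) → 0 < y →
      f (Function.update x i (x i + y)) ≤ f x + f (Function.update x i y))
    (hmeas : AEMeasurable f (volume.restrict {x : Fin d → ℝ | ∀ i, 0 < x i}))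
    (t : Fin d → ℝ) (ht : ∀ i, 0 < t i) :
    ENNReal.ofReal ((∏ i, t i) / 2 ^ d) ≤
      volume {x : Fin d → ℝ | (∀ i, 0 < x i ∧ x i < t i) ∧ f t / 2 ^ d ≤ f x} := by
  classical
  set k : ℝ := f t / 2 ^ d with hk
  set V : Set (Fin d → ℝ) := {x | (∀ i, 0 < x i ∧ x i < t i) ∧ k ≤ f x} with hV
  set box : Set (Fin d → ℝ) := Set.pi Set.univ fun i => Set.Ioo 0 (t i) with hbox
  -- every x in box lies in some reflected preimage of V
  have hcover : box ⊆ ⋃ S ∈ (Finset.univ : Finset (Finset (Fin d))), (reflW t S) ⁻¹' V := by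
    intro x hx
    have hx' : ∀ i, 0 < x i ∧ x i < t i := fun i => by
      have := hx i (Set.mem_univ i); exact ⟨this.1, this.2⟩
    have hsum := key_sum f hf t Finset.univ x hx'
    have hft : (fun i => if i ∈ (Finset.univ : Finset (Fin d)) then t i else x i) = t := by
      funext i; simp
    rw [hft, Finset.powerset_univ] at hsum
    have hcard : (Finset.univ : Finset (Finset (Fin d))).card = 2 ^ d := by
      simp [Fintype.card_finset]
    have hconst : ∑ _S ∈ (Finset.univ : Finset (Finset (Fin d))), k = f t := by
      rw [Finset.sum_const, hcard, nsmul_eq_mul, hk]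
      push_cast
      field_simp
    obtain ⟨S, -, hS⟩ := Finset.exists_le_of_sum_le ⟨∅, Finset.mem_univ ∅⟩
      (le_of_eq_of_le hconst hsum)
    refine Set.mem_biUnion (Finset.mem_univ S) ?_
    have hwS : ∀ i, reflW t S x i = if i ∈ S then t i - x i else x i := reflW_apply t S x
    constructor
    · intro i
      rw [hwS i]
      split
      · exact ⟨sub_pos.2 (hx' i).2, by linarith [(hx' i).1]⟩
      · exact hx' i
    · have : reflW t S x = fun i => if i ∈ S then t i - x i else x i := funext hwS
      rw [this]; exact hS
  -- measures
  have hVrefl : ∀ S : Finset (Fin d), volume ((reflW t S) ⁻¹' V) = volume V := by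
    intro S
    rw [← MeasurableEquiv.map_apply (reflW t S) V, (reflW_mp t S).map_eq]
  have hboxvol : volume box = ENNReal.ofReal (∏ i, t i) := by
    rw [hbox, volume_pi_pi]
    simp only [Real.volume_Ioo, sub_zero]
    rw [← ENNReal.ofReal_prod_of_nonneg (fun i _ => (ht i).le)]
  have hle : volume box ≤ 2 ^ d * volume V := by
    calc volume box ≤ ∑ S ∈ (Finset.univ : Finset (Finset (Fin d))),
          volume ((reflW t S) ⁻¹' V) :=
        le_trans (measure_mono hcover) (measure_biUnion_finset_le _ _)
      _ = 2 ^ d * volume V := by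
        simp only [hVrefl, Finset.sum_const, Finset.card_univ, Fintype.card_finset,
          Fintype.card_fin, nsmul_eq_mul]
        push_cast
        ring
  rw [hboxvol] at hle
  have h2 : (ENNReal.ofReal ((2:ℝ) ^ d)) = 2 ^ d := by
    rw [ENNReal.ofReal_pow (by norm_num)]
    norm_num
  rw [ENNReal.ofReal_div_of_pos (by positivity), h2]
  rw [ENNReal.div_le_iff (by positivity) (by simp)]
  rw [mul_comm] at hle
  exact hle
end

section
/- Let d ≥ 1, let w ∈ {0,1}^d contain an even number of 1s, let ℝ_w be the corresponding open orthant of ℝ^d, and let f : ℝ_w → ℝ be componentwise subadditive and Lebesgue measurable. Then the limit of f(x_1,…,x_d)/(x_1⋯x_d) along the directed set ℛ_w (each coordinate x_i tending to +∞ if w_i = 0 and to −∞ if w_i = 1, with the corresponding product order) exists and equals inf_{(x_1,…,x_d) ∈ ℝ_w} f(x_1,…,x_d)/(x_1⋯x_d); this value is not +∞ but can be −∞. -/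
open Filter MeasureTheory Topology Function
open scoped ENNReal
set_option maxHeartbeats 1000000

section aux
variable {d : ℕ} {f : (Fin d → ℝ) → ℝ}
  (hf : ∀ (i : Fin d) (x : Fin d → ℝ) (y : ℝ), (∀ j, 0 < x j) → 0 < y →
      f (Function.update x i (x i + y)) ≤ f x + f (Function.update x i y))

include hf

lemma fekete_onecoord (i : Fin d) (x : Fin d → ℝ) (hx : ∀ j, 0 < x j)
    {y r : ℝ} (hy : 0 < y) (hr : 0 < r) (n : ℕ) :
    f (update x i (n * y + r)) ≤ n * f (update x i y) + f (update x i r) := by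
  induction n with
  | zero => simp
  | succ n ih =>
    have hp : ∀ j, 0 < update x i y j := by
      intro j
      rcases eq_or_ne j i with rfl | h
      · simpa using hy
      · simpa [Function.update_apply, h] using hx j
    have hz : (0:ℝ) < n * y + r := by positivity
    have h1 := hf i (update x i y) (n * y + r) hp hz
    rw [Function.update_idem, Function.update_idem, Function.update_self] at h1
    have h2 : y + (n * y + r) = ((n:ℝ)+1) * y + r := by ring
    rw [h2] at h1
    calc f (update x i (((n:ℕ)+1 : ℕ) * y + r)) = f (update x i (((n:ℝ)+1) * y + r)) := by
          push_cast; ring_nf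
      _ ≤ f (update x i y) + f (update x i (n * y + r)) := h1
      _ ≤ f (update x i y) + (n * f (update x i y) + f (update x i r)) := by linarith
      _ = (((n:ℕ)+1 : ℕ):ℝ) * f (update x i y) + f (update x i r) := by push_cast; ring

lemma fekete_split (T : Finset (Fin d)) (n : Fin d → ℕ) (y r : Fin d → ℝ)
    (hy : ∀ i, 0 < y i) (hr : ∀ i, 0 < r i) :
    ∀ (x : Fin d → ℝ), (∀ j, 0 < x j) → (∀ i ∈ T, x i = n i * y i + r i) →
    f x ≤ ∑ S ∈ T.powerset, (∏ i ∈ S, (n i : ℝ)) *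
      f (fun i => if i ∈ S then y i else if i ∈ T then r i else x i) := by
  classical
  induction T using Finset.induction_on with
  | empty =>
    intro x hx _
    simp
  | insert _ _ hj ih =>
    rename_i j T
    intro x hx hxT
    have hIH := ih x hx (fun i hi => hxT i (Finset.mem_insert_of_mem hi))
    rw [Finset.sum_powerset_insert hj]
    refine hIH.trans ?_
    rw [← Finset.sum_add_distrib]
    refine Finset.sum_le_sum ?_
    intro S hS
    have hST : S ⊆ T := Finset.mem_powerset.mp hS
    have hjS : j ∉ S := fun h => hj (hST h)
    set wS : Fin d → ℝ := fun i => if i ∈ S then y i else if i ∈ T then r i else x i with hwS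
    have hwpos : ∀ k, 0 < wS k := by
      intro k; simp only [hwS]
      split_ifs
      · exact hy k
      · exact hr k
      · exact hx k
    have hwj : wS j = x j := by simp [hwS, hjS, hj]
    have key := fekete_onecoord hf j wS hwpos (hy j) (hr j) (n j)
    have hxj : x j = n j * y j + r j := hxT j (Finset.mem_insert_self j T)
    have hweq : update wS j (↑(n j) * y j + r j) = wS := by
      rw [← hxj, ← hwj, Function.update_eq_self]
    rw [hweq] at key
    have e1 : update wS j (y j) = fun i => if i ∈ insert j S then y i
        else if i ∈ insert j T then r i else x i := by
      funext i
      rcases eq_or_ne i j with rfl | h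
      · simp
      · simp [Function.update_apply, h, hwS, Finset.mem_insert, h]
    have e2 : update wS j (r j) = fun i => if i ∈ S then y i
        else if i ∈ insert j T then r i else x i := by
      funext i
      rcases eq_or_ne i j with rfl | h
      · simp [hjS]
      · simp [Function.update_apply, h, hwS, Finset.mem_insert, h]
    rw [e1, e2] at key
    calc (∏ i ∈ S, (n i : ℝ)) * f wS
        ≤ (∏ i ∈ S, (n i : ℝ)) * ((n j) * f (fun i => if i ∈ insert j S then y i
            else if i ∈ insert j T then r i else x i) +
            f (fun i => if i ∈ S then y i else if i ∈ insert j T then r i else x i)) := by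
          apply mul_le_mul_of_nonneg_left key
          positivity
      _ = (∏ i ∈ S, (n i : ℝ)) * f (fun i => if i ∈ S then y i
            else if i ∈ insert j T then r i else x i) +
          (∏ i ∈ insert j S, (n i : ℝ)) * f (fun i => if i ∈ insert j S then y i
            else if i ∈ insert j T then r i else x i) := by
          rw [Finset.prod_insert hjS]; ring

lemma fekete_bounded
    (hmeas : AEMeasurable f (volume.restrict {x : Fin d → ℝ | ∀ i, 0 < x i}))
    (a b : Fin d → ℝ) (ha : ∀ i, 0 < a i) :
    ∃ M : ℝ, ∀ z : Fin d → ℝ, (∀ i, z i ∈ Set.Icc (a i) (b i)) → f z ≤ M := by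
  classical
  by_contra hcon
  push_neg at hcon
  set P : Set (Fin d → ℝ) := {x | ∀ i, 0 < x i} with hP
  have hPmeas : MeasurableSet P := by
    have : P = Set.pi Set.univ (fun _ => Set.Ioi (0:ℝ)) := by
      ext x; simp [hP, Set.mem_pi]
    rw [this]
    exact MeasurableSet.univ_pi (fun i => measurableSet_Ioi)
  set g := hmeas.mk f with hg
  have hgmeas : Measurable g := hmeas.measurable_mk
  have hfg : f =ᵐ[volume.restrict P] g := hmeas.ae_eq_mk
  set N : Set (Fin d → ℝ) := toMeasurable volume ({x | f x ≠ g x} ∩ P) with hNdef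
  have hNnull : volume N = 0 := by
    rw [hNdef, measure_toMeasurable]
    have := hfg
    rw [Filter.EventuallyEq, ae_iff, Measure.restrict_apply' hPmeas] at this
    simpa using this
  have hNsub : {x | f x ≠ g x} ∩ P ⊆ N := subset_toMeasurable _ _
  have hNmeas : MeasurableSet N := measurableSet_toMeasurable _ _
  -- boxes
  set obox : (Fin d → ℝ) → Set (Fin d → ℝ) :=
    fun c => Set.pi Set.univ (fun i => Set.Ioo 0 (c i)) with hobox
  have hoboxmeas : ∀ c, MeasurableSet (obox c) :=
    fun c => MeasurableSet.univ_pi (fun i => measurableSet_Ioo)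
  have hoboxvol : ∀ c, volume (obox c) = ∏ i, ENNReal.ofReal (c i) := by
    intro c
    rw [hobox]
    rw [volume_pi_pi]
    simp [Real.volume_Ioo]
  -- bad sets
  set B : ℕ → Set (Fin d → ℝ) := fun k => {t ∈ obox b | (k:ℝ) ≤ g t} with hB
  have hBmeas : ∀ k, MeasurableSet (B k) := by
    intro k
    exact (hoboxmeas b).inter (hgmeas measurableSet_Ici)
  have hBanti : Antitone B := by
    intro k l hkl t ht
    exact ⟨ht.1, le_trans (by exact_mod_cast hkl) ht.2⟩
  -- the key measure bound
  have key : ∀ k : ℕ, volume (obox a) ≤ ((2^d : ℕ) : ℝ≥0∞) * volume (B k) := by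
    intro k
    obtain ⟨x, hxbox, hxbig⟩ := hcon ((2^d : ℕ) * k)
    have hxpos : ∀ i, 0 < x i := fun i => lt_of_lt_of_le (ha i) (hxbox i).1
    -- covering
    set φ : Finset (Fin d) → (Fin d → ℝ) → (Fin d → ℝ) :=
      fun S t => fun i => if i ∈ S then t i else x i - t i with hφ
    have hcover : obox x ⊆ ⋃ S : Finset (Fin d), φ S ⁻¹' (B k ∪ N) := by
      intro t ht
      have htI : ∀ i, t i ∈ Set.Ioo 0 (x i) := by
        intro i; exact ht i (Set.mem_univ i)
      have hty : ∀ i, 0 < t i := fun i => (htI i).1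
      have htr : ∀ i, 0 < x i - t i := fun i => sub_pos.mpr (htI i).2
      have hsplit := fekete_split hf Finset.univ (fun _ => 1) t (fun i => x i - t i)
        hty htr x hxpos (by intro i _; push_cast; ring)
      rw [Finset.powerset_univ] at hsplit
      simp only [Finset.mem_univ, if_true, Finset.prod_const, Nat.cast_one, one_pow,
        one_mul] at hsplit
      -- exists S with large value
      have hex : ∃ S : Finset (Fin d), f x / (2^d : ℝ) ≤ f (φ S t) := by
        by_contra hno
        push_neg at hno
        have hlt : ∑ S : Finset (Fin d),
            f (fun i => if i ∈ S then t i else x i - t i)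
            < ∑ _S : Finset (Fin d), f x / (2^d : ℝ) := by
          apply Finset.sum_lt_sum_of_nonempty
          · exact Finset.univ_nonempty
          · intro S _
            exact hno S
        rw [Finset.sum_const, Finset.card_univ, Fintype.card_finset, Fintype.card_fin,
          nsmul_eq_mul] at hlt
        have h2 : ((2^d : ℕ) : ℝ) * (f x / 2^d) = f x := by
          push_cast
          field_simp
        rw [h2] at hlt
        exact absurd (lt_of_le_of_lt hsplit hlt) (lt_irrefl _)
      obtain ⟨S, hS⟩ := hex
      have hbig : (k:ℝ) < f (φ S t) := by
        have h2pos : (0:ℝ) < 2^d := by positivity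
        have : ((2^d : ℕ) : ℝ) * k < f x := hxbig
        have hk : (k:ℝ) < f x / 2^d := by
          rw [lt_div_iff₀ h2pos]
          push_cast at this ⊢
          linarith
        exact lt_of_lt_of_le hk hS
      have hφmem : φ S t ∈ obox x := by
        intro i _
        simp only [hφ]
        split_ifs
        · exact htI i
        · constructor
          · exact htr i
          · have := hty i; linarith
      have hφP : φ S t ∈ P := fun i => (hφmem i (Set.mem_univ i)).1
      have hφb : φ S t ∈ obox b := by
        intro i _
        have := hφmem i (Set.mem_univ i)
        exact ⟨this.1, lt_of_lt_of_le this.2 (hxbox i).2⟩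
      refine Set.mem_iUnion.mpr ⟨S, ?_⟩
      rcases eq_or_ne (f (φ S t)) (g (φ S t)) with heq | hne
      · left
        exact ⟨hφb, by rw [← heq]; exact hbig.le⟩
      · right
        exact hNsub ⟨hne, hφP⟩
    -- measure preservation
    have hφmp : ∀ S : Finset (Fin d), MeasurePreserving (φ S) volume volume := by
      intro S
      set ψ : Fin d → ℝ → ℝ := fun i u => if i ∈ S then u else x i - u with hψ
      have hψmp : ∀ i, MeasurePreserving (ψ i) volume volume := by
        intro i
        by_cases h : i ∈ S
        · simp only [hψ, h, if_true]; exact MeasurePreserving.id (volume : Measure ℝ)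
        · simpa [hψ, h] using Measure.measurePreserving_sub_left (volume : Measure ℝ) (x i)
      have : φ S = fun (t : Fin d → ℝ) (i : Fin d) => ψ i (t i) := by
        funext t i
        by_cases h : i ∈ S <;> simp [hφ, hψ, h]
      rw [this]
      exact volume_preserving_pi hψmp
    have hsub1 : volume (obox a) ≤ volume (obox x) := by
      apply measure_mono
      intro t ht i _
      have := ht i (Set.mem_univ i)
      exact ⟨this.1, lt_of_lt_of_le this.2 (hxbox i).1⟩
    have hsub2 : volume (obox x) ≤ ∑ S : Finset (Fin d), volume (φ S ⁻¹' (B k ∪ N)) := by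
      refine le_trans (measure_mono hcover) ?_
      rw [← tsum_fintype (L := .unconditional _)]
      exact measure_iUnion_le _
    have hsub3 : ∀ S : Finset (Fin d), volume (φ S ⁻¹' (B k ∪ N)) ≤ volume (B k) := by
      intro S
      rw [(hφmp S).measure_preimage (((hBmeas k).union hNmeas).nullMeasurableSet)]
      calc volume (B k ∪ N) ≤ volume (B k) + volume N := measure_union_le _ _
        _ = volume (B k) := by rw [hNnull, add_zero]
    calc volume (obox a) ≤ ∑ S : Finset (Fin d), volume (φ S ⁻¹' (B k ∪ N)) :=
          le_trans hsub1 hsub2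
      _ ≤ ∑ _S : Finset (Fin d), volume (B k) := Finset.sum_le_sum (fun S _ => hsub3 S)
      _ = ((2^d : ℕ) : ℝ≥0∞) * volume (B k) := by
          rw [Finset.sum_const, Finset.card_univ, Fintype.card_finset, Fintype.card_fin,
            nsmul_eq_mul]
  -- conclude
  have hVpos : volume (obox a) ≠ 0 := by
    rw [hoboxvol]
    rw [Finset.prod_ne_zero_iff]
    intro i _
    simp [ENNReal.ofReal_eq_zero, not_le, ha i]
  have hVfin : volume (obox a) ≠ ⊤ := by
    rw [hoboxvol]
    exact (ENNReal.prod_lt_top (fun i _ => ENNReal.ofReal_lt_top)).ne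
  have hInter : (⋂ k, B k) = ∅ := by
    ext t
    simp only [Set.mem_iInter, Set.mem_empty_iff_false, iff_false]
    intro h
    obtain ⟨k, hk⟩ := exists_nat_gt (g t)
    exact absurd ((h k).2) (not_le.mpr hk)
  have hFin : volume (B 0) ≠ ⊤ := by
    refine ne_top_of_le_ne_top ?_ (measure_mono (fun t ht => ht.1))
    rw [hoboxvol]
    exact (ENNReal.prod_lt_top (fun i _ => ENNReal.ofReal_lt_top)).ne
  have hiInf : (⨅ k, volume (B k)) = 0 := by
    rw [← Directed.measure_iInter
      (fun k => (hBmeas k).nullMeasurableSet)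
      (hBanti.directed_ge) ⟨0, hFin⟩]
    rw [hInter]
    exact measure_empty
  have h2ne : ((2^d : ℕ) : ℝ≥0∞) ≠ 0 := by
    simp [pow_ne_zero]
  have h2fin : ((2^d : ℕ) : ℝ≥0∞) ≠ ⊤ := ENNReal.natCast_ne_top _
  have hεpos : 0 < volume (obox a) / ((2^d : ℕ) : ℝ≥0∞) :=
    ENNReal.div_pos hVpos h2fin
  obtain ⟨k, hk⟩ : ∃ k, volume (B k) < volume (obox a) / ((2^d : ℕ) : ℝ≥0∞) := by
    by_contra hno
    push_neg at hno
    have := le_iInf hno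
    rw [hiInf] at this
    exact absurd (lt_of_lt_of_le hεpos this) (lt_irrefl _)
  have := key k
  have h2 : ((2^d : ℕ) : ℝ≥0∞) * volume (B k)
      < ((2^d : ℕ) : ℝ≥0∞) * (volume (obox a) / ((2^d : ℕ) : ℝ≥0∞)) := by
    exact ENNReal.mul_lt_mul_right h2ne h2fin hk
  rw [ENNReal.mul_div_cancel h2ne h2fin] at h2
  exact absurd (lt_of_le_of_lt this h2) (lt_irrefl _)
theorem fekete_pos
    (hmeas : AEMeasurable f (volume.restrict {x : Fin d → ℝ | ∀ i, 0 < x i})) :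
    Tendsto (fun x : Fin d → ℝ => ((f x / ∏ i, x i : ℝ) : EReal))
      (Filter.pi fun _ : Fin d => (atTop : Filter ℝ))
      (𝓝 (⨅ x ∈ {x : Fin d → ℝ | ∀ i, 0 < x i}, ((f x / ∏ i, x i : ℝ) : EReal))) := by
  classical
  set P : Set (Fin d → ℝ) := {x | ∀ i, 0 < x i} with hP
  set v : (Fin d → ℝ) → EReal := fun x => ((f x / ∏ i, x i : ℝ) : EReal) with hv
  set L : EReal := ⨅ x ∈ P, v x with hL
  rw [tendsto_order]
  constructor
  · -- lower bound: easy
    intro e he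
    have hev : ∀ᶠ x : Fin d → ℝ in Filter.pi fun _ => (atTop : Filter ℝ), ∀ i, (1:ℝ) ≤ x i :=
      Filter.eventually_pi (fun i => eventually_ge_atTop 1)
    filter_upwards [hev] with x hx
    have hxP : x ∈ P := fun i => lt_of_lt_of_le one_pos (hx i)
    exact lt_of_lt_of_le he (iInf₂_le x hxP)
  · -- upper bound: the hard direction
    intro e he
    induction e using EReal.rec with
    | bot => exact absurd he (not_lt_bot)
    | top =>
      filter_upwards with x
      exact EReal.coe_lt_top _
    | coe c =>
      obtain ⟨y, hyP, hyv⟩ : ∃ y, y ∈ P ∧ v y < (c : EReal) := by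
        rw [hL] at he
        obtain ⟨y, hy⟩ := iInf_lt_iff.mp he
        obtain ⟨hyP, hy2⟩ := iInf_lt_iff.mp hy
        exact ⟨y, hyP, hy2⟩
      have hy : ∀ i, 0 < y i := hyP
      set Y : ℝ := ∏ i, y i with hY
      have hYpos : 0 < Y := Finset.prod_pos (fun i _ => hy i)
      set c₀ : ℝ := f y / Y with hc₀
      have hc₀c : c₀ < c := by
        have : ((f y / Y : ℝ) : EReal) < (c : EReal) := hyv
        exact_mod_cast this
      obtain ⟨M, hM⟩ := fekete_bounded hf hmeas y (fun i => 2 * y i) hy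
      set M' : ℝ := max M 0 with hM'
      have hM'0 : 0 ≤ M' := le_max_right _ _
      -- choose N
      set tgt : ℝ := (c - c₀) / 2 * Y with htgt
      have htgtpos : 0 < tgt := by
        apply mul_pos _ hYpos
        linarith
      have hF : Tendsto (fun N : ℕ =>
          |c₀| * Y * ((1 + 2 / (N:ℝ))^d - 1) + M' * ((1 + 1 / (N:ℝ))^d - 1))
          atTop (𝓝 0) := by
        have h0 : Tendsto (fun N : ℕ => 1 / (N:ℝ)) atTop (𝓝 0) :=
          tendsto_one_div_atTop_nhds_zero_nat
        have h2 : Tendsto (fun N : ℕ => 2 / (N:ℝ)) atTop (𝓝 0) := by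
          have := h0.const_mul (2:ℝ)
          simpa [div_eq_mul_inv, mul_comm, mul_assoc] using this
        have hp1 : Tendsto (fun N : ℕ => (1 + 1 / (N:ℝ))^d) atTop (𝓝 1) := by
          have h := ((tendsto_const_nhds : Tendsto (fun _ : ℕ => (1:ℝ)) atTop (𝓝 1)).add h0).pow d
          simpa using h
        have hp2 : Tendsto (fun N : ℕ => (1 + 2 / (N:ℝ))^d) atTop (𝓝 1) := by
          have h := ((tendsto_const_nhds : Tendsto (fun _ : ℕ => (1:ℝ)) atTop (𝓝 1)).add h2).pow d
          simpa using h
        have := ((hp2.sub_const 1).const_mul (|c₀| * Y)).add ((hp1.sub_const 1).const_mul M')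
        simpa using this
      obtain ⟨N, hN1, hψ⟩ : ∃ N : ℕ, 1 ≤ N ∧
          |c₀| * Y * ((1 + 2 / (N:ℝ))^d - 1) + M' * ((1 + 1 / (N:ℝ))^d - 1) < tgt := by
        have := (eventually_ge_atTop 1).and (hF.eventually_lt_const htgtpos)
        exact this.exists
      have hNpos : (0:ℝ) < N := by exact_mod_cast hN1
      set u1 : ℝ := (1 + 1 / (N:ℝ))^d with hu1
      set u2 : ℝ := (1 + 2 / (N:ℝ))^d with hu2
      -- the eventual estimate
      have hev : ∀ᶠ x : Fin d → ℝ in Filter.pi fun _ => (atTop : Filter ℝ),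
          ∀ i, ((N:ℝ) + 2) * y i ≤ x i :=
        Filter.eventually_pi (fun i => eventually_ge_atTop _)
      filter_upwards [hev] with x hx
      -- setup n and r
      have hxpos : ∀ i, 0 < x i := by
        intro i
        have := hx i
        nlinarith [hy i]
      set n : Fin d → ℕ := fun i => ⌊x i / y i⌋₊ - 1 with hn
      set r : Fin d → ℝ := fun i => x i - n i * y i with hr
      have hfloor : ∀ i, N + 2 ≤ ⌊x i / y i⌋₊ := by
        intro i
        apply Nat.le_floor
        rw [le_div_iff₀ (hy i)]
        push_cast
        exact hx i
      have hone_le_floor : ∀ i, 1 ≤ ⌊x i / y i⌋₊ := fun i => le_trans (by omega) (hfloor i)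
      have hncast : ∀ i, ((n i : ℕ) : ℝ) = (⌊x i / y i⌋₊ : ℝ) - 1 := by
        intro i
        rw [hn]
        push_cast [Nat.cast_sub (hone_le_floor i)]
        ring
      have hnN : ∀ i, (N:ℝ) ≤ (n i : ℝ) := by
        intro i
        rw [hncast i]
        have := hfloor i
        have : ((N:ℝ) + 2) ≤ (⌊x i / y i⌋₊ : ℝ) := by exact_mod_cast this
        linarith
      have hn1 : ∀ i, (1:ℝ) ≤ (n i : ℝ) := fun i => le_trans (by exact_mod_cast hN1) (hnN i)
      have hfl_le : ∀ i, (⌊x i / y i⌋₊ : ℝ) * y i ≤ x i := by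
        intro i
        rw [← le_div_iff₀ (hy i)]
        exact Nat.floor_le (div_nonneg (hxpos i).le (hy i).le)
      have hfl_gt : ∀ i, x i < ((⌊x i / y i⌋₊ : ℝ) + 1) * y i := by
        intro i
        rw [← div_lt_iff₀ (hy i)]
        exact Nat.lt_floor_add_one _
      have hr1 : ∀ i, y i ≤ r i := by
        intro i
        have h1 := hfl_le i
        simp only [hr]
        rw [hncast i]
        nlinarith
      have hr2 : ∀ i, r i < 2 * y i := by
        intro i
        have h1 := hfl_gt i
        simp only [hr]
        rw [hncast i]
        nlinarith
      have hrpos : ∀ i, 0 < r i := fun i => lt_of_lt_of_le (hy i) (hr1 i)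
      have hxe : ∀ i ∈ Finset.univ, x i = (n i : ℝ) * y i + r i := by
        intro i _
        simp only [hr]
        ring
      -- apply the splitting lemma
      have hsplit := fekete_split hf Finset.univ n y r hy hrpos x hxpos hxe
      rw [Finset.powerset_univ] at hsplit
      simp only [Finset.mem_univ, if_true] at hsplit
      -- bound the sum
      set A : ℝ := ∏ i, (n i : ℝ) with hA
      set Q : ℝ := ∏ i, ((n i : ℝ) + 1) with hQ
      have hApos : 0 < A := Finset.prod_pos (fun i _ => lt_of_lt_of_le one_pos (hn1 i))
      have hQsum : Q = ∑ S : Finset (Fin d), ∏ i ∈ S, (n i : ℝ) := by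
        rw [hQ, Finset.prod_add]
        simp [Finset.powerset_univ]
      have hzuniv : (fun i => if i ∈ (Finset.univ : Finset (Fin d)) then y i else r i) = y := by
        funext i
        simp
      have hzbox : ∀ S : Finset (Fin d), ∀ i,
          (if i ∈ S then y i else r i) ∈ Set.Icc (y i) (2 * y i) := by
        intro S i
        split_ifs
        · exact ⟨le_refl _, by linarith [hy i]⟩
        · exact ⟨hr1 i, (hr2 i).le⟩
      have hbound : f x ≤ A * f y + M' * (Q - A) := by
        have hsum := Finset.sum_erase_add (Finset.univ : Finset (Finset (Fin d)))
          (fun S => (∏ i ∈ S, (n i : ℝ)) * f (fun i => if i ∈ S then y i else r i))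
          (Finset.mem_univ Finset.univ)
        have hsum2 := Finset.sum_erase_add (Finset.univ : Finset (Finset (Fin d)))
          (fun S => ∏ i ∈ S, (n i : ℝ)) (Finset.mem_univ Finset.univ)
        have hterm : ∀ S ∈ (Finset.univ : Finset (Finset (Fin d))).erase Finset.univ,
            (∏ i ∈ S, (n i : ℝ)) * f (fun i => if i ∈ S then y i else r i)
            ≤ (∏ i ∈ S, (n i : ℝ)) * M' := by
          intro S _
          apply mul_le_mul_of_nonneg_left _ (Finset.prod_nonneg (fun i _ => by positivity))
          exact le_trans (hM _ (fun i => hzbox S i)) (le_max_left _ _)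
        calc f x ≤ ∑ S : Finset (Fin d),
              (∏ i ∈ S, (n i : ℝ)) * f (fun i => if i ∈ S then y i else r i) := hsplit
          _ = (∑ S ∈ (Finset.univ : Finset (Finset (Fin d))).erase Finset.univ,
                (∏ i ∈ S, (n i : ℝ)) * f (fun i => if i ∈ S then y i else r i))
              + A * f y := by
              rw [← hsum]
              simp only [hzuniv, hA]
          _ ≤ (∑ S ∈ (Finset.univ : Finset (Finset (Fin d))).erase Finset.univ,
                (∏ i ∈ S, (n i : ℝ)) * M') + A * f y := by
              exact add_le_add_left (Finset.sum_le_sum hterm) _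
          _ = (Q - A) * M' + A * f y := by
              rw [← Finset.sum_mul]
              congr 1
              congr 1
              have : ∑ S ∈ (Finset.univ : Finset (Finset (Fin d))).erase Finset.univ,
                  ∏ i ∈ S, (n i : ℝ) = Q - A := by
                rw [hQsum]
                rw [← hsum2]
                simp [hA]
              exact this
          _ = A * f y + M' * (Q - A) := by ring
      -- product estimates
      set X : ℝ := ∏ i, x i with hX
      have hnyx : ∀ i, (n i : ℝ) * y i ≤ x i := by
        intro i
        have h := hr1 i
        simp only [hr] at h
        linarith [hy i]
      have hP1 : A * Y ≤ X := by
        rw [hA, hY, ← Finset.prod_mul_distrib]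
        apply Finset.prod_le_prod
        · intro i _
          exact mul_nonneg (Nat.cast_nonneg _) (hy i).le
        · intro i _
          exact hnyx i
      have hXpos : 0 < X := lt_of_lt_of_le (mul_pos hApos hYpos) hP1
      have hP2 : X ≤ A * Y * u2 := by
        have : X ≤ ∏ i, ((n i : ℝ) * (1 + 2 / (N:ℝ)) * y i) := by
          rw [hX]
          apply Finset.prod_le_prod
          · intro i _
            exact (hxpos i).le
          · intro i _
            have h1 : x i ≤ ((n i : ℝ) + 2) * y i := by
              have := hr2 i
              simp only [hr] at this
              nlinarith
            have h2 : ((n i : ℝ) + 2) ≤ (n i : ℝ) * (1 + 2 / (N:ℝ)) := by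
              have hN := hnN i
              rw [mul_add, mul_one]
              have : 2 ≤ (n i : ℝ) * (2 / (N:ℝ)) := by
                rw [mul_div_assoc']
                rw [le_div_iff₀ hNpos]
                nlinarith
              linarith
            calc x i ≤ ((n i : ℝ) + 2) * y i := h1
              _ ≤ (n i : ℝ) * (1 + 2 / (N:ℝ)) * y i := by
                  apply mul_le_mul_of_nonneg_right h2 (hy i).le
        calc X ≤ ∏ i, ((n i : ℝ) * (1 + 2 / (N:ℝ)) * y i) := this
          _ = A * Y * u2 := by
              rw [hA, hY, hu2, Finset.prod_mul_distrib, Finset.prod_mul_distrib,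
                Finset.prod_const, Finset.card_univ, Fintype.card_fin]
              ring
      have hP3 : Q ≤ A * u1 := by
        have : Q ≤ ∏ i, ((n i : ℝ) * (1 + 1 / (N:ℝ))) := by
          rw [hQ]
          apply Finset.prod_le_prod
          · intro i _
            positivity
          · intro i _
            have hN := hnN i
            rw [mul_add, mul_one]
            have : 1 ≤ (n i : ℝ) * (1 / (N:ℝ)) := by
              rw [mul_div_assoc']
              rw [le_div_iff₀ hNpos]
              nlinarith
            linarith
        calc Q ≤ ∏ i, ((n i : ℝ) * (1 + 1 / (N:ℝ))) := this
          _ = A * u1 := by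
              rw [hA, hu1, Finset.prod_mul_distrib, Finset.prod_const, Finset.card_univ,
                Fintype.card_fin]
      -- final arithmetic
      have hfyc : f y = c₀ * Y := by
        rw [hc₀]
        field_simp
      have e2 : M' * (Q - A) ≤ A * (M' * (u1 - 1)) := by
        have h1 : Q - A ≤ A * (u1 - 1) := by nlinarith
        nlinarith
      have e3 : c₀ * (A * Y) ≤ c₀ * X + |c₀| * (X - A * Y) := by
        have h1 := le_abs_self (c₀ * (A * Y - X))
        have h2 : |c₀ * (A * Y - X)| = |c₀| * (X - A * Y) := by
          rw [abs_mul, abs_of_nonpos (show A * Y - X ≤ 0 by linarith), neg_sub]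
        nlinarith
      have e4 : X - A * Y ≤ A * Y * (u2 - 1) := by nlinarith
      have e6 : |c₀| * (A * Y * (u2 - 1)) + A * (M' * (u1 - 1))
          ≤ A * ((c - c₀) / 2 * Y) := by
        have habs : 0 ≤ |c₀| := abs_nonneg _
        have hpsi2 := hψ.le
        rw [htgt] at hpsi2
        nlinarith [hpsi2]
      have e7 : A * ((c - c₀) / 2 * Y) ≤ (c - c₀) / 2 * X := by
        have h1 : (0:ℝ) ≤ (c - c₀) / 2 := by linarith
        nlinarith
      have hfinal : f x < c * X := by
        have h1 : f x ≤ c₀ * (A * Y) + M' * (Q - A) := by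
          rw [hfyc] at hbound
          nlinarith
        have h2 : |c₀| * (X - A * Y) ≤ |c₀| * (A * Y * (u2 - 1)) := by
          have := abs_nonneg c₀
          nlinarith
        have h3 : (c - c₀) / 2 * X < (c - c₀) * X := by nlinarith
        linarith
      have hdiv : f x / X < c := by
        rw [div_lt_iff₀ hXpos]
        linarith [hfinal, mul_comm c X]
      show ((f x / ∏ i, x i : ℝ) : EReal) < ((c:ℝ) : EReal)
      rw [← hX]
      exact_mod_cast hdiv

end aux

/-- **Fekete's lemma in an orthant with evenly many negative coordinates.**
Let `w ∈ {0,1}^d` have an even number of ones and let `f` be componentwise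
subadditive and Lebesgue measurable on the open orthant
`ℝ_w = {x | x i > 0 if w i = false, x i < 0 if w i = true}`.  Then
`f(x₁,…,x_d)/(x₁⋯x_d)` converges, along the directed set `ℛ_w` (coordinate `i`
tending to `+∞` if `w i = false` and to `−∞` if `w i = true`), to its infimum
over `ℝ_w`, which is not `+∞` but can be `−∞`. -/
theorem fekete_lemma_orthant_even
    (d : ℕ) (hd : 1 ≤ d) (w : Fin d → Bool)
    (hw : Even (Finset.univ.filter fun i => w i = true).card)
    (f : (Fin d → ℝ) → ℝ)
    (hf : ∀ (i : Fin d) (x : Fin d → ℝ) (y : ℝ),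
      (∀ j, if w j then x j < 0 else 0 < x j) →
      (if w i then y < 0 else 0 < y) →
      f (Function.update x i (x i + y)) ≤ f x + f (Function.update x i y))
    (hmeas : AEMeasurable f
      (volume.restrict {x : Fin d → ℝ | ∀ i, if w i then x i < 0 else 0 < x i})) :
    (⨅ x ∈ {x : Fin d → ℝ | ∀ i, if w i then x i < 0 else 0 < x i},
        ((f x / ∏ i, x i : ℝ) : EReal)) ≠ ⊤ ∧
    Tendsto (fun x : Fin d → ℝ => ((f x / ∏ i, x i : ℝ) : EReal))
      (Filter.pi fun i => if w i then (atBot : Filter ℝ) else atTop)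
      (𝓝 (⨅ x ∈ {x : Fin d → ℝ | ∀ i, if w i then x i < 0 else 0 < x i},
        ((f x / ∏ i, x i : ℝ) : EReal))) := by
  classical
  set Sw : Set (Fin d → ℝ) := {x | ∀ i, if w i then x i < 0 else 0 < x i} with hSw
  set Pp : Set (Fin d → ℝ) := {x | ∀ i, 0 < x i} with hPp
  set m : (Fin d → ℝ) → (Fin d → ℝ) := fun x i => if w i then -x i else x i with hm
  have hmm : ∀ x, m (m x) = x := by
    intro x
    funext i
    simp only [hm]
    by_cases h : w i <;> simp [h]
  have hmem : ∀ x, m x ∈ Pp ↔ x ∈ Sw := by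
    intro x
    constructor
    · intro h i
      have := h i
      simp only [hm] at this
      by_cases hwi : w i <;> simp [hwi] at this ⊢ <;> linarith
    · intro h i
      have := h i
      simp only [hm]
      by_cases hwi : w i <;> simp [hwi] at this ⊢ <;> linarith
  have hmemrev : ∀ x, x ∈ Sw → m x ∈ Pp := fun x hx => (hmem x).mpr hx
  have hmemrev2 : ∀ x, x ∈ Pp → m x ∈ Sw := by
    intro x hx
    rw [← hmem, hmm]
    exact hx
  have hprod : ∀ x : Fin d → ℝ, (∏ i, m x i) = ∏ i, x i := by
    intro x
    have h1 : ∀ i, m x i = (if w i then (-1:ℝ) else 1) * x i := by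
      intro i
      simp only [hm]
      by_cases h : w i <;> simp [h]
    calc (∏ i, m x i) = ∏ i, ((if w i then (-1:ℝ) else 1) * x i) := by
          exact Finset.prod_congr rfl (fun i _ => h1 i)
      _ = (∏ i, (if w i then (-1:ℝ) else 1)) * ∏ i, x i := Finset.prod_mul_distrib
      _ = ∏ i, x i := by
          rw [Finset.prod_ite, Finset.prod_const, Finset.prod_const]
          rw [Even.neg_one_pow hw]
          simp
  -- v and infima
  set v : (Fin d → ℝ) → EReal := fun x => ((f x / ∏ i, x i : ℝ) : EReal) with hv
  set L : EReal := ⨅ x ∈ Sw, v x with hL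
  set F : (Fin d → ℝ) → ℝ := fun x => f (m x) with hF
  have hvm : ∀ x : Fin d → ℝ, ((F x / ∏ i, x i : ℝ) : EReal) = v (m x) := by
    intro x
    simp only [hF, hv]
    rw [hprod x]
  have hFsub : ∀ (i : Fin d) (x : Fin d → ℝ) (y : ℝ), (∀ j, 0 < x j) → 0 < y →
      F (Function.update x i (x i + y)) ≤ F x + F (Function.update x i y) := by
    intro i x y hx hy
    set y' : ℝ := if w i then -y else y with hy'
    have h1 : ∀ j, if w j then (m x) j < 0 else 0 < (m x) j := by
      intro j
      simp only [hm]
      by_cases h : w j <;> simp [h] <;> linarith [hx j]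
    have h2 : if w i then y' < 0 else 0 < y' := by
      simp only [hy']
      by_cases h : w i <;> simp [h] <;> linarith
    have key := hf i (m x) y' h1 h2
    have e1 : m (Function.update x i (x i + y)) =
        Function.update (m x) i ((m x) i + y') := by
      funext j
      rcases eq_or_ne j i with rfl | hne
      · simp only [hm, hy', Function.update_self]
        by_cases h : w j <;> simp [h] <;> try ring
      · simp [hm, Function.update_of_ne hne]
    have e2 : m (Function.update x i y) = Function.update (m x) i y' := by
      funext j
      rcases eq_or_ne j i with rfl | hne
      · simp only [hm, hy', Function.update_self]
        try (by_cases h : w j <;> simp [h])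
      · simp [hm, Function.update_of_ne hne]
    simp only [hF]
    rw [e1, e2]
    exact key
  -- measurability transfer
  have hSwmeas : MeasurableSet Sw := by
    have : Sw = Set.pi Set.univ (fun i => if w i then Set.Iio (0:ℝ) else Set.Ioi 0) := by
      ext x
      simp only [hSw, Set.mem_setOf_eq, Set.mem_pi, Set.mem_univ, forall_true_left]
      constructor <;> intro h i <;> have := h i <;> by_cases hwi : w i <;>
        simp [hwi] at this ⊢ <;> exact this
    rw [this]
    exact MeasurableSet.univ_pi (fun i => by split_ifs <;> measurability)
  have hmp : MeasurePreserving m volume volume := by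
    set ψ : Fin d → ℝ → ℝ := fun i u => if w i then -u else u with hψ
    have hψmp : ∀ i, MeasurePreserving (ψ i) volume volume := by
      intro i
      by_cases h : w i
      · simpa [hψ, h] using Measure.measurePreserving_neg (volume : Measure ℝ)
      · simp only [hψ, h, if_false]; exact MeasurePreserving.id (volume : Measure ℝ)
    have : m = fun (x : Fin d → ℝ) (i : Fin d) => ψ i (x i) := by
      funext x i
      by_cases h : w i <;> simp [hm, hψ, h]
    rw [this]
    exact volume_preserving_pi hψmp
  have hpre : m ⁻¹' Sw = Pp := by
    ext x
    simp only [Set.mem_preimage]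
    constructor
    · intro h
      have := hmemrev _ h
      rwa [hmm] at this
    · intro h
      exact hmemrev2 _ h
  have hmpr : MeasurePreserving m (volume.restrict Pp) (volume.restrict Sw) := by
    have := hmp.restrict_preimage hSwmeas
    rwa [hpre] at this
  have hFmeas : AEMeasurable F (volume.restrict Pp) :=
    hmeas.comp_quasiMeasurePreserving hmpr.quasiMeasurePreserving
  -- apply the positive-orthant theorem
  have hpos := fekete_pos hFsub hFmeas
  set L' : EReal := ⨅ x ∈ Pp, ((F x / ∏ i, x i : ℝ) : EReal) with hL'
  have hLL' : L' = L := by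
    apply le_antisymm
    · apply le_iInf₂
      intro z hz
      have h1 : m z ∈ Pp := hmemrev z hz
      have h2 : L' ≤ ((F (m z) / ∏ i, (m z) i : ℝ) : EReal) := iInf₂_le (m z) h1
      rw [hvm (m z), hmm z] at h2
      exact h2
    · apply le_iInf₂
      intro z hz
      have h1 : m z ∈ Sw := hmemrev2 z hz
      have h2 : L ≤ v (m z) := iInf₂_le (m z) h1
      rw [← hvm z] at h2
      exact h2
  constructor
  · -- not top
    set x₀ : Fin d → ℝ := fun i => if w i then -1 else 1 with hx₀
    have hx₀S : x₀ ∈ Sw := by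
      intro i
      simp only [hx₀]
      by_cases h : w i <;> simp [h]
    have hle : L ≤ v x₀ := iInf₂_le x₀ hx₀S
    exact (lt_of_le_of_lt hle (EReal.coe_lt_top _)).ne
  · -- tendsto
    have htm : Tendsto m (Filter.pi fun i => if w i then (atBot : Filter ℝ) else atTop)
        (Filter.pi fun _ : Fin d => (atTop : Filter ℝ)) := by
      rw [Filter.tendsto_pi]
      intro i
      have heval : Tendsto (fun x : Fin d → ℝ => x i)
          (Filter.pi fun i => if w i then (atBot : Filter ℝ) else atTop)
          (if w i then (atBot : Filter ℝ) else atTop) := Filter.tendsto_eval_pi _ i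
      by_cases h : w i
      · have : Tendsto (fun x : Fin d → ℝ => x i)
            (Filter.pi fun i => if w i then (atBot : Filter ℝ) else atTop) atBot := by
          simpa [h] using heval
        have hcomp := (tendsto_neg_atBot_atTop).comp this
        apply hcomp.congr
        intro x
        simp [hm, h, Function.comp]
      · have : Tendsto (fun x : Fin d → ℝ => x i)
            (Filter.pi fun i => if w i then (atBot : Filter ℝ) else atTop) atTop := by
          simpa [h] using heval
        apply this.congr
        intro x
        simp [hm, h]
    have hfun : ((fun x : Fin d → ℝ => ((F x / ∏ i, x i : ℝ) : EReal)) ∘ m) = v := by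
      funext x
      have h1 := hvm (m x)
      simp only [Function.comp_apply]
      rw [h1, hmm x]
    have hcomp := hpos.comp htm
    rw [hfun] at hcomp
    have hcomp' : Tendsto v (Filter.pi fun i => if w i then (atBot : Filter ℝ) else atTop)
        (𝓝 L') := hcomp
    rw [hLL'] at hcomp'
    exact hcomp'
end

section
/- Let d ≥ 1 and let f : ℝ_{>0}^d → ℝ be componentwise subadditive and Lebesgue measurable. Let T be either ℝ_{>0} or ℤ_{>0}, and for each i ∈ {1,…,d} let x_i : T → ℝ_{>0} satisfy lim_{t→+∞} x_i(t) = +∞. Then lim_{t→+∞} f(x_1(t),…,x_d(t))/(x_1(t)⋯x_d(t)) exists in ℝ ∪ {−∞} and equals inf_{x_1,…,x_d > 0} f(x_1,…,x_d)/(x_1⋯x_d). -/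
open Filter MeasureTheory Topology

section FeketeAux
variable {d : ℕ}

private lemma update_pos {x : Fin d → ℝ} (hx : ∀ i, 0 < x i) {j : Fin d} {c : ℝ} (hc : 0 < c) :
    ∀ i, 0 < Function.update x j c i := by
  intro i
  rcases eq_or_ne i j with rfl | h
  · simpa
  · simpa [Function.update_of_ne h] using hx i

private noncomputable def nu (a : Fin d → ℝ) (y : Fin d → ℝ) (i : Fin d) : ℕ := ⌊y i / a i⌋₊ - 1

private lemma nu_facts {a y : Fin d → ℝ} (ha : ∀ i, 0 < a i) (hy : ∀ i, a i ≤ y i) (i : Fin d) :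
    y i / a i - 2 < (nu a y i : ℝ) ∧ (nu a y i : ℝ) ≤ y i / a i - 1 := by
  have hai := ha i
  have hq1 : (1:ℝ) ≤ y i / a i := (one_le_div hai).2 (hy i)
  have hfl : 1 ≤ ⌊y i / a i⌋₊ := Nat.le_floor (by exact_mod_cast hq1)
  have hcast : (nu a y i : ℝ) = (⌊y i / a i⌋₊ : ℝ) - 1 := by
    rw [nu, Nat.cast_sub hfl, Nat.cast_one]
  constructor
  · rw [hcast]
    have := Nat.lt_floor_add_one (y i / a i)
    linarith
  · rw [hcast]
    have := Nat.floor_le (le_trans zero_le_one hq1)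
    linarith

variable (f : (Fin d → ℝ) → ℝ)
variable (hf : ∀ (i : Fin d) (x : Fin d → ℝ) (y : ℝ), (∀ j, 0 < x j) → 0 < y →
      f (Function.update x i (x i + y)) ≤ f x + f (Function.update x i y))

include hf in
private lemma iterate_subadd (x : Fin d → ℝ) (hx : ∀ i, 0 < x i) (j : Fin d) {b c : ℝ}
    (hb : 0 < b) (hc : 0 < c) :
    ∀ m : ℕ, f (Function.update x j (m * b + c)) ≤
      m * f (Function.update x j b) + f (Function.update x j c) := by
  intro m
  induction m with
  | zero => simp
  | succ m ih =>
    have hpos : 0 < (m : ℝ) * b + c := by positivity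
    have h1 := hf j (Function.update x j ((m : ℝ) * b + c)) b (update_pos hx hpos) hb
    rw [Function.update_idem, Function.update_idem, Function.update_self] at h1
    have he : ((m : ℕ) + 1 : ℕ) * b + c = ((m : ℝ) * b + c) + b := by push_cast; ring
    rw [show (((m + 1 : ℕ) : ℝ)) * b + c = ((m : ℝ) * b + c) + b by push_cast; ring]
    calc f (Function.update x j ((m : ℝ) * b + c + b))
        ≤ f (Function.update x j ((m : ℝ) * b + c)) + f (Function.update x j b) := h1
      _ ≤ (m * f (Function.update x j b) + f (Function.update x j c)) + f (Function.update x j b) := by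
          linarith
      _ = ((m + 1 : ℕ) : ℝ) * f (Function.update x j b) + f (Function.update x j c) := by
          push_cast; ring

include hf in
private lemma split_subadd :
    ∀ (T : Finset (Fin d)) (w s : Fin d → ℝ), (∀ i, 0 < w i) → (∀ i, 0 < s i) →
      (∀ i ∈ T, s i < w i) →
      f w ≤ ∑ S ∈ T.powerset,
        f (fun i => if i ∈ T then (if i ∈ S then s i else w i - s i) else w i) := by
  intro T
  induction T using Finset.induction_on with
  | empty =>
    intro w s hw hs hsw
    simp
  | insert j T' hj ih =>
    intro w s hw hs hsw
    have hsj : 0 < s j := hs j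
    have hwj : s j < w j := hsw j (Finset.mem_insert_self j T')
    -- split coordinate j
    have h1 := hf j (Function.update w j (s j)) (w j - s j) (update_pos hw hsj)
      (by linarith)
    simp only [Function.update_idem, Function.update_self] at h1
    have hww : Function.update w j (s j + (w j - s j)) = w := by
      rw [show s j + (w j - s j) = w j by ring, Function.update_eq_self]
    rw [hww] at h1
    set w1 := Function.update w j (s j) with hw1
    set w2 := Function.update w j (w j - s j) with hw2
    have hw1pos : ∀ i, 0 < w1 i := update_pos hw hsj
    have hw2pos : ∀ i, 0 < w2 i := update_pos hw (by linarith)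
    have ih1 := ih w1 s hw1pos hs (by
      intro i hi
      have hij : i ≠ j := fun h => hj (h ▸ hi)
      rw [hw1, Function.update_of_ne hij]
      exact hsw i (Finset.mem_insert_of_mem hi))
    have ih2 := ih w2 s hw2pos hs (by
      intro i hi
      have hij : i ≠ j := fun h => hj (h ▸ hi)
      rw [hw2, Function.update_of_ne hij]
      exact hsw i (Finset.mem_insert_of_mem hi))
    rw [Finset.sum_powerset_insert hj]
    have h1' : f w ≤ f w2 + f w1 := by linarith
    refine le_trans h1' (add_le_add (le_trans ih2 ?_) (le_trans ih1 ?_))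
    · -- w2 terms correspond to subsets S (without j)
      refine le_of_eq (Finset.sum_congr rfl fun S hS => ?_)
      have hjS : j ∉ S := fun h => hj (Finset.mem_powerset.1 hS h)
      congr 1
      funext i
      rcases eq_or_ne i j with rfl | hij
      · simp [hw2, hj, hjS]
      · by_cases hiT : i ∈ T' <;>
          simp [hw2, Function.update_of_ne hij, hiT, hij]
    · -- w1 terms correspond to subsets insert j S
      refine le_of_eq (Finset.sum_congr rfl fun S hS => ?_)
      have hST : S ⊆ T' := Finset.mem_powerset.1 hS
      congr 1
      funext i
      rcases eq_or_ne i j with rfl | hij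
      · simp [hw1, hj]
      · by_cases hiT : i ∈ T' <;> by_cases hiS : i ∈ S <;>
          simp [hw1, Function.update_of_ne hij, hiT, hij, hiS]

include hf in
private lemma bounded_on_box
    (hmeas : AEMeasurable f (volume.restrict {x : Fin d → ℝ | ∀ i, 0 < x i}))
    (a : Fin d → ℝ) (ha : ∀ i, 0 < a i) :
    ∃ M : ℝ, ∀ x : Fin d → ℝ, (∀ i, a i ≤ x i ∧ x i ≤ 2 * a i) → f x ≤ M := by
  classical
  by_contra hcon
  push_neg at hcon
  set O : Set (Fin d → ℝ) := {x | ∀ i, 0 < x i} with hO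
  have hOmeas : MeasurableSet O := by
    have : O = Set.pi Set.univ (fun _ : Fin d => Set.Ioi (0:ℝ)) := by
      ext x; simp [Set.mem_pi, hO]
    rw [this]; exact MeasurableSet.pi Set.countable_univ (fun i _ => measurableSet_Ioi)
  set g := hmeas.mk f with hgdef
  have hgmeas : Measurable g := hmeas.measurable_mk
  have hfg : f =ᵐ[volume.restrict O] g := hmeas.ae_eq_mk
  have hN : volume ({x | f x ≠ g x} ∩ O) = 0 := by
    have h0 : volume.restrict O {x | ¬ f x = g x} = 0 := hfg
    rwa [Measure.restrict_apply' hOmeas] at h0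
  set U : Set (Fin d → ℝ) := Set.pi Set.univ (fun i => Set.Ioo (0:ℝ) (2 * a i)) with hU
  set S0 : Set (Fin d → ℝ) := Set.pi Set.univ (fun i => Set.Ioo (0:ℝ) (a i)) with hS0
  have hUmeas : MeasurableSet U := MeasurableSet.univ_pi (fun i => measurableSet_Ioo)
  have hUO : U ⊆ O := by
    intro x hx i
    exact (hx i (Set.mem_univ i)).1
  set B : ℕ → Set (Fin d → ℝ) := fun n => {x | (n:ℝ) ≤ g x} ∩ U with hB
  have hBmeas : ∀ n, MeasurableSet (B n) := fun n =>
    (measurableSet_le measurable_const hgmeas).inter hUmeas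
  have key : ∀ n : ℕ, volume S0 ≤ 2^d * volume (B n) := by
    intro n
    obtain ⟨w, hwbox, hwf⟩ := hcon ((n : ℝ) * 2 ^ d)
    have hwpos : ∀ i, 0 < w i := fun i => lt_of_lt_of_le (ha i) (hwbox i).1
    set ψ : Finset (Fin d) → (Fin d → ℝ) → (Fin d → ℝ) :=
      fun S x i => if i ∈ S then x i else w i - x i with hψ
    have hψm : ∀ S, MeasurePreserving (ψ S) volume volume := by
      intro S
      have hrw : ψ S = fun (x : Fin d → ℝ) (i : Fin d) =>
          (if i ∈ S then (id : ℝ → ℝ) else (fun t : ℝ => w i - t)) (x i) := by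
        funext x i
        by_cases h : i ∈ S <;> simp [hψ, h]
      rw [hrw]
      refine volume_preserving_pi (fun i => ?_)
      by_cases h : i ∈ S
      · simp only [h, if_true]; exact MeasurePreserving.id _
      · simp only [h, if_false]; exact Measure.measurePreserving_sub_left volume (w i)
    have cover : S0 ⊆ ⋃ S ∈ (Finset.univ : Finset (Fin d)).powerset,
        ψ S ⁻¹' ({x | (n:ℝ) ≤ f x} ∩ U) := by
      intro s hs
      have hspos : ∀ i, 0 < s i := fun i => (hs i (Set.mem_univ i)).1
      have hsa : ∀ i, s i < a i := fun i => (hs i (Set.mem_univ i)).2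
      have hsw : ∀ i, s i < w i := fun i => lt_of_lt_of_le (hsa i) (hwbox i).1
      have hsplit := split_subadd f hf Finset.univ w s hwpos hspos (fun i _ => hsw i)
      simp only [Finset.mem_univ, if_true] at hsplit
      have hex : ∃ S ∈ (Finset.univ : Finset (Fin d)).powerset, (n:ℝ) ≤ f (ψ S s) := by
        by_contra hno
        push_neg at hno
        have hlt : ∑ S ∈ (Finset.univ : Finset (Fin d)).powerset, f (ψ S s)
            < ∑ S ∈ (Finset.univ : Finset (Fin d)).powerset, (n:ℝ) :=
          Finset.sum_lt_sum_of_nonempty (Finset.powerset_nonempty _) hno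
        rw [Finset.sum_const, Finset.card_powerset, Finset.card_univ, Fintype.card_fin] at hlt
        have : (2^d : ℕ) • (n:ℝ) = (n:ℝ) * 2^d := by
          rw [nsmul_eq_mul]; push_cast; ring
        rw [this] at hlt
        have hle' : f w ≤ ∑ S ∈ (Finset.univ : Finset (Fin d)).powerset, f (ψ S s) := hsplit
        linarith
      obtain ⟨S, hSmem, hSf⟩ := hex
      refine Set.mem_biUnion hSmem ?_
      refine ⟨hSf, ?_⟩
      intro i _
      by_cases h : i ∈ S
      · simp only [hψ, h, if_true]
        exact ⟨hspos i, lt_of_lt_of_le (lt_of_lt_of_le (hsa i) (hwbox i).1)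
          (le_trans (hwbox i).2 (le_refl _))⟩
      · simp only [hψ, h, if_false]
        constructor
        · linarith [hsw i]
        · have := (hwbox i).2
          linarith [hspos i]
    have hstep : ∀ S : Finset (Fin d),
        volume (ψ S ⁻¹' ({x | (n:ℝ) ≤ f x} ∩ U)) ≤ volume (B n) := by
      intro S
      have hsub : {x | (n:ℝ) ≤ f x} ∩ U ⊆ B n ∪ ({x | f x ≠ g x} ∩ O) := by
        intro x hx
        by_cases hxe : f x = g x
        · left; exact ⟨show (n:ℝ) ≤ g x from hxe ▸ hx.1, hx.2⟩
        · right; exact ⟨hxe, hUO hx.2⟩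
      calc volume (ψ S ⁻¹' ({x | (n:ℝ) ≤ f x} ∩ U))
          ≤ volume (ψ S ⁻¹' (B n) ∪ ψ S ⁻¹' ({x | f x ≠ g x} ∩ O)) := by
            refine measure_mono ?_
            rw [← Set.preimage_union]
            exact Set.preimage_mono hsub
        _ ≤ volume (ψ S ⁻¹' (B n)) + volume (ψ S ⁻¹' ({x | f x ≠ g x} ∩ O)) :=
            measure_union_le _ _
        _ = volume (B n) + 0 := by
            rw [(hψm S).measure_preimage (hBmeas n).nullMeasurableSet,
              (hψm S).quasiMeasurePreserving.preimage_null hN]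
        _ = volume (B n) := add_zero _
    calc volume S0 ≤ volume (⋃ S ∈ (Finset.univ : Finset (Fin d)).powerset,
          ψ S ⁻¹' ({x | (n:ℝ) ≤ f x} ∩ U)) := measure_mono cover
      _ ≤ ∑ S ∈ (Finset.univ : Finset (Fin d)).powerset,
            volume (ψ S ⁻¹' ({x | (n:ℝ) ≤ f x} ∩ U)) := measure_biUnion_finset_le _ _
      _ ≤ ∑ _S ∈ (Finset.univ : Finset (Fin d)).powerset, volume (B n) :=
            Finset.sum_le_sum (fun S _ => hstep S)
      _ = 2^d * volume (B n) := by
            rw [Finset.sum_const, Finset.card_powerset, Finset.card_univ, Fintype.card_fin,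
              nsmul_eq_mul]
            norm_cast
  -- now derive contradiction
  have hS0vol : volume S0 = ∏ i, ENNReal.ofReal (a i) := by
    rw [hS0, volume_pi_pi]
    simp [Real.volume_Ioo]
  have hS0pos : 0 < volume S0 := by
    rw [hS0vol]
    refine CanonicallyOrderedAdd.prod_pos.2 (fun i _ => ?_)
    exact ENNReal.ofReal_pos.2 (ha i)
  have hBfin : volume (B 0) ≠ ⊤ := by
    have h1 : volume (B 0) ≤ volume U := measure_mono Set.inter_subset_right
    have h2 : volume U < ⊤ := by
      rw [hU, volume_pi_pi]
      exact ENNReal.prod_lt_top (fun i _ => by simp [Real.volume_Ioo]; exact ENNReal.mul_lt_top ENNReal.ofNat_lt_top ENNReal.ofReal_lt_top)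
    exact (lt_of_le_of_lt h1 h2).ne
  have hBanti : Antitone B := by
    intro m k hmk x hx
    refine ⟨?_, hx.2⟩
    show (m:ℝ) ≤ g x
    have hx1 : (k:ℝ) ≤ g x := hx.1
    have hmk' : (m:ℝ) ≤ (k:ℝ) := by exact_mod_cast hmk
    linarith
  have hInter : ⋂ n, B n = ∅ := by
    ext x
    simp only [Set.mem_iInter, Set.mem_empty_iff_false, iff_false]
    intro h
    obtain ⟨n, hn⟩ := exists_nat_gt (g x)
    exact absurd ((h n).1) (not_le.2 hn)
  have htend : Tendsto (volume ∘ B) atTop (𝓝 0) := by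
    have := tendsto_measure_iInter_atTop (fun n => (hBmeas n).nullMeasurableSet) hBanti ⟨0, hBfin⟩
    rwa [hInter, measure_empty] at this
  have htend2 : Tendsto (fun n => 2^d * volume (B n)) atTop (𝓝 0) := by
    have h := ENNReal.Tendsto.const_mul (a := (2 : ENNReal)^d) htend (Or.inr (by simp))
    simpa using h
  have hfinal : volume S0 ≤ 0 := ge_of_tendsto htend2 (Eventually.of_forall key)
  exact absurd (le_antisymm hfinal zero_le) (ne_of_gt hS0pos)

include hf in
private lemma expand_subadd (a : Fin d → ℝ) (ha : ∀ i, 0 < a i)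
    (M : ℝ) (hM0 : 0 ≤ M) (hM : ∀ x : Fin d → ℝ, (∀ i, a i ≤ x i ∧ x i ≤ 2 * a i) → f x ≤ M) :
    ∀ (T : Finset (Fin d)) (y : Fin d → ℝ),
      (∀ i, a i ≤ y i) → (∀ i ∉ T, y i < 2 * a i) →
      f y ≤ (∏ i ∈ T, (nu a y i : ℝ)) * f (fun i => if i ∈ T then a i else y i)
            + M * ((∏ i ∈ T, ((nu a y i : ℝ) + 1)) - ∏ i ∈ T, (nu a y i : ℝ)) := by
  intro T
  induction T using Finset.induction_on with
  | empty =>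
    intro y hy hw
    simp only [Finset.prod_empty, Finset.notMem_empty, if_false, one_mul, sub_self, mul_zero,
      add_zero]
    exact le_of_eq rfl
  | insert j T' hj ih =>
    intro y hy hw
    have hypos : ∀ i, 0 < y i := fun i => lt_of_lt_of_le (ha i) (hy i)
    set m : ℕ := nu a y j with hm
    have hmf := nu_facts ha hy j
    have haj := ha j
    set r : ℝ := y j - m * a j with hr
    have hr1 : a j ≤ r := by
      have : (m:ℝ) ≤ y j / a j - 1 := hmf.2
      rw [hr]
      have : (m:ℝ) * a j ≤ (y j / a j - 1) * a j := by nlinarith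
      have hdiv : (y j / a j) * a j = y j := div_mul_cancel₀ _ (ne_of_gt haj)
      nlinarith
    have hr2 : r < 2 * a j := by
      have h1 : y j / a j - 2 < (m:ℝ) := hmf.1
      rw [hr]
      have hdiv : (y j / a j) * a j = y j := div_mul_cancel₀ _ (ne_of_gt haj)
      nlinarith
    have hrpos : 0 < r := lt_of_lt_of_le haj hr1
    -- split coordinate j
    have hiter := iterate_subadd f hf y hypos j haj hrpos m
    have hupdy : Function.update y j ((m:ℝ) * a j + r) = y := by
      rw [show (m:ℝ) * a j + r = y j by rw [hr]; ring, Function.update_eq_self]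
    rw [hupdy] at hiter
    set y1 := Function.update y j (a j) with hy1
    set y2 := Function.update y j r with hy2
    have hy1a : ∀ i, a i ≤ y1 i := by
      intro i; rcases eq_or_ne i j with rfl | h
      · simp [hy1]
      · simpa [hy1, Function.update_of_ne h] using hy i
    have hy2a : ∀ i, a i ≤ y2 i := by
      intro i; rcases eq_or_ne i j with rfl | h
      · simpa [hy2] using hr1
      · simpa [hy2, Function.update_of_ne h] using hy i
    have hy1w : ∀ i ∉ T', y1 i < 2 * a i := by
      intro i hi; rcases eq_or_ne i j with rfl | h
      · simp [hy1]; linarith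
      · rw [hy1, Function.update_of_ne h]
        exact hw i (by simp [Finset.mem_insert, h, hi])
    have hy2w : ∀ i ∉ T', y2 i < 2 * a i := by
      intro i hi; rcases eq_or_ne i j with rfl | h
      · simpa [hy2] using hr2
      · rw [hy2, Function.update_of_ne h]
        exact hw i (by simp [Finset.mem_insert, h, hi])
    have ih1 := ih y1 hy1a hy1w
    have ih2 := ih y2 hy2a hy2w
    -- nu of updates agrees on T'
    have hnu1 : ∀ i ∈ T', nu a y1 i = nu a y i := by
      intro i hi
      have h : i ≠ j := fun hh => hj (hh ▸ hi)
      rw [nu, nu, hy1, Function.update_of_ne h]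
    have hnu2 : ∀ i ∈ T', nu a y2 i = nu a y i := by
      intro i hi
      have h : i ≠ j := fun hh => hj (hh ▸ hi)
      rw [nu, nu, hy2, Function.update_of_ne h]
    have hprod1 : (∏ i ∈ T', (nu a y1 i : ℝ)) = ∏ i ∈ T', (nu a y i : ℝ) :=
      Finset.prod_congr rfl (fun i hi => by rw [hnu1 i hi])
    have hprod1' : (∏ i ∈ T', ((nu a y1 i : ℝ) + 1)) = ∏ i ∈ T', ((nu a y i : ℝ) + 1) :=
      Finset.prod_congr rfl (fun i hi => by rw [hnu1 i hi])
    have hprod2 : (∏ i ∈ T', (nu a y2 i : ℝ)) = ∏ i ∈ T', (nu a y i : ℝ) :=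
      Finset.prod_congr rfl (fun i hi => by rw [hnu2 i hi])
    have hprod2' : (∏ i ∈ T', ((nu a y2 i : ℝ) + 1)) = ∏ i ∈ T', ((nu a y i : ℝ) + 1) :=
      Finset.prod_congr rfl (fun i hi => by rw [hnu2 i hi])
    rw [hprod1, hprod1'] at ih1
    rw [hprod2, hprod2'] at ih2
    -- the main point of y1 equals the main point of insert j T'
    have hpt1 : (fun i => if i ∈ T' then a i else y1 i)
        = (fun i => if i ∈ insert j T' then a i else y i) := by
      funext i
      rcases eq_or_ne i j with rfl | h
      · simp [hy1, hj]
      · by_cases hiT : i ∈ T' <;>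
          simp [hy1, Function.update_of_ne h, hiT, h, Finset.mem_insert]
    rw [hpt1] at ih1
    -- the main point of y2 lies in the box
    have hpt2box : ∀ i, a i ≤ (fun i => if i ∈ T' then a i else y2 i) i ∧
        (fun i => if i ∈ T' then a i else y2 i) i ≤ 2 * a i := by
      intro i
      by_cases hiT : i ∈ T'
      · simp [hiT]; linarith [ha i]
      · rcases eq_or_ne i j with rfl | h
        · simp [hiT, hy2]; exact ⟨hr1, by linarith⟩
        · simp only [hiT, if_false]
          rw [hy2, Function.update_of_ne h]
          have hii : i ∉ insert j T' := by simp [Finset.mem_insert, h, hiT]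
          exact ⟨hy i, le_of_lt (hw i hii)⟩
    have hfpt2 : f (fun i => if i ∈ T' then a i else y2 i) ≤ M := hM _ hpt2box
    -- nonnegativity of products
    have hNnonneg : (0:ℝ) ≤ ∏ i ∈ T', (nu a y i : ℝ) :=
      Finset.prod_nonneg (fun i _ => Nat.cast_nonneg _)
    have hPnonneg : (0:ℝ) ≤ ∏ i ∈ T', ((nu a y i : ℝ) + 1) :=
      Finset.prod_nonneg (fun i _ => by positivity)
    have hNP : (∏ i ∈ T', (nu a y i : ℝ)) ≤ ∏ i ∈ T', ((nu a y i : ℝ) + 1) :=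
      Finset.prod_le_prod (fun i _ => Nat.cast_nonneg _) (fun i _ => by linarith)
    have hmnn : (0:ℝ) ≤ (m:ℝ) := Nat.cast_nonneg _
    -- combine
    have hcomb : f y ≤ (m:ℝ) * ((∏ i ∈ T', (nu a y i : ℝ)) *
          f (fun i => if i ∈ insert j T' then a i else y i)
          + M * ((∏ i ∈ T', ((nu a y i : ℝ) + 1)) - ∏ i ∈ T', (nu a y i : ℝ)))
        + ((∏ i ∈ T', (nu a y i : ℝ)) * M
          + M * ((∏ i ∈ T', ((nu a y i : ℝ) + 1)) - ∏ i ∈ T', (nu a y i : ℝ))) := by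
      have h1 : (m:ℝ) * f y1 ≤ (m:ℝ) * ((∏ i ∈ T', (nu a y i : ℝ)) *
          f (fun i => if i ∈ insert j T' then a i else y i)
          + M * ((∏ i ∈ T', ((nu a y i : ℝ) + 1)) - ∏ i ∈ T', (nu a y i : ℝ))) :=
        mul_le_mul_of_nonneg_left ih1 hmnn
      have h2 : f y2 ≤ (∏ i ∈ T', (nu a y i : ℝ)) * M
          + M * ((∏ i ∈ T', ((nu a y i : ℝ) + 1)) - ∏ i ∈ T', (nu a y i : ℝ)) := by
        refine le_trans ih2 (add_le_add_left ?_ _)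
        exact mul_le_mul_of_nonneg_left hfpt2 hNnonneg
      linarith
    rw [Finset.prod_insert hj, Finset.prod_insert hj]
    calc f y ≤ _ := hcomb
      _ = ((m:ℝ) * ∏ i ∈ T', (nu a y i : ℝ)) *
            f (fun i => if i ∈ insert j T' then a i else y i)
          + M * (((m:ℝ) + 1) * (∏ i ∈ T', ((nu a y i : ℝ) + 1))
              - (m:ℝ) * ∏ i ∈ T', (nu a y i : ℝ)) := by ring

include hf in
private lemma key_lemma
    (hmeas : AEMeasurable f (volume.restrict {x : Fin d → ℝ | ∀ i, 0 < x i}))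
    (a : Fin d → ℝ) (ha : ∀ i, 0 < a i) {ε : ℝ} (hε : 0 < ε) :
    ∃ R : ℝ, ∀ y : Fin d → ℝ, (∀ i, R ≤ y i) →
      f y / ∏ i, y i ≤ f a / ∏ i, a i + ε := by
  classical
  obtain ⟨M₀, hM₀⟩ := bounded_on_box f hf hmeas a ha
  set M : ℝ := max M₀ 0 with hMdef
  have hM0 : (0:ℝ) ≤ M := le_max_right _ _
  have hMbox : ∀ x : Fin d → ℝ, (∀ i, a i ≤ x i ∧ x i ≤ 2 * a i) → f x ≤ M :=
    fun x hx => le_trans (hM₀ x hx) (le_max_left _ _)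
  set C : ℝ := |f a| + M with hCdef
  have hC0 : (0:ℝ) ≤ C := by positivity
  have hlim : Tendsto (fun R : ℝ => ∏ i, (1 / a i - 2 / R)) atTop (𝓝 (∏ i, (1 / a i))) := by
    refine tendsto_finset_prod _ (fun i _ => ?_)
    have h2 : Tendsto (fun R : ℝ => 2 / R) atTop (𝓝 0) := by
      simpa [div_eq_mul_inv] using tendsto_inv_atTop_zero.const_mul (2:ℝ)
    simpa using tendsto_const_nhds.sub h2
  have hlim2 : Tendsto (fun R : ℝ => C * ((∏ i, (1 / a i)) - ∏ i, (1 / a i - 2 / R)))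
      atTop (𝓝 0) := by
    have := (tendsto_const_nhds (x := (∏ i, (1 / a i) : ℝ))).sub hlim
    have h3 := this.const_mul C
    simpa using h3
  have hev1 : ∀ᶠ R in (atTop : Filter ℝ),
      C * ((∏ i, (1 / a i)) - ∏ i, (1 / a i - 2 / R)) < ε :=
    hlim2.eventually_lt_const hε
  have hev2 : ∀ᶠ R in (atTop : Filter ℝ), ∀ i, 2 * a i ≤ R :=
    eventually_all.2 (fun i => eventually_ge_atTop (2 * a i))
  have hev3 : ∀ᶠ R in (atTop : Filter ℝ), (0:ℝ) < R := eventually_gt_atTop 0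
  obtain ⟨R, hR2, hR1, hR3⟩ := (hev1.and (hev2.and hev3)).exists
  refine ⟨R, fun y hy => ?_⟩
  have hya : ∀ i, a i ≤ y i := fun i => by have := hR1 i; have := hy i; have := ha i; linarith
  have hypos : ∀ i, 0 < y i := fun i => lt_of_lt_of_le (ha i) (hya i)
  have hYpos : (0:ℝ) < ∏ i, y i := Finset.prod_pos (fun i _ => hypos i)
  have main := expand_subadd f hf a ha M hM0 hMbox Finset.univ y hya
    (fun i hi => absurd (Finset.mem_univ i) hi)
  simp only [Finset.mem_univ, if_true] at main
  have main' : f y ≤ (∏ i, (nu a y i : ℝ)) * f a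
      + M * ((∏ i, ((nu a y i : ℝ) + 1)) - ∏ i, (nu a y i : ℝ)) := main
  -- factor products
  have hNfact : (∏ i, (nu a y i : ℝ)) = (∏ i, ((nu a y i : ℝ) / y i)) * ∏ i, y i := by
    rw [← Finset.prod_mul_distrib]
    exact Finset.prod_congr rfl (fun i _ => (div_mul_cancel₀ _ (ne_of_gt (hypos i))).symm)
  have hPfact : (∏ i, ((nu a y i : ℝ) + 1)) = (∏ i, (((nu a y i : ℝ) + 1) / y i)) * ∏ i, y i := by
    rw [← Finset.prod_mul_distrib]
    exact Finset.prod_congr rfl (fun i _ => (div_mul_cancel₀ _ (ne_of_gt (hypos i))).symm)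
  -- pointwise bounds
  have hlo_nonneg : ∀ i, (0:ℝ) ≤ 1 / a i - 2 / R := by
    intro i
    have h1 : 2 / R ≤ 1 / a i := by
      rw [div_le_div_iff₀ hR3 (ha i)]
      linarith [hR1 i]
    linarith
  have hp_lo : ∀ i, 1 / a i - 2 / R ≤ (nu a y i : ℝ) / y i := by
    intro i
    rw [le_div_iff₀ (hypos i)]
    have h1 := (nu_facts ha hya i).1
    have hyR : (1:ℝ) ≤ y i / R := (one_le_div hR3).2 (hy i)
    have he : (1 / a i - 2 / R) * y i = y i / a i - 2 * (y i / R) := by ring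
    rw [he]
    linarith
  have hp_hi : ∀ i, (nu a y i : ℝ) / y i ≤ 1 / a i := by
    intro i
    rw [div_le_iff₀ (hypos i)]
    have h1 := (nu_facts ha hya i).2
    have he : 1 / a i * y i = y i / a i := by ring
    rw [he]
    linarith
  have hp1_hi : ∀ i, ((nu a y i : ℝ) + 1) / y i ≤ 1 / a i := by
    intro i
    rw [div_le_iff₀ (hypos i)]
    have h1 := (nu_facts ha hya i).2
    have he : 1 / a i * y i = y i / a i := by ring
    rw [he]
    linarith
  have hp_nonneg : ∀ i, (0:ℝ) ≤ (nu a y i : ℝ) / y i :=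
    fun i => div_nonneg (Nat.cast_nonneg _) (le_of_lt (hypos i))
  set Plo : ℝ := ∏ i, (1 / a i - 2 / R) with hPlo
  set Phi : ℝ := ∏ i, (1 / a i) with hPhi
  have hPloPhi : Plo ≤ Phi :=
    Finset.prod_le_prod (fun i _ => hlo_nonneg i) (fun i _ => by
      have := hp_lo i; have := hp_hi i; linarith [div_nonneg (le_of_lt hR3) (le_of_lt hR3)])
  have hprod_lo : Plo ≤ ∏ i, ((nu a y i : ℝ) / y i) :=
    Finset.prod_le_prod (fun i _ => hlo_nonneg i) (fun i _ => hp_lo i)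
  have hprod_hi : (∏ i, ((nu a y i : ℝ) / y i)) ≤ Phi :=
    Finset.prod_le_prod (fun i _ => hp_nonneg i) (fun i _ => hp_hi i)
  have hprod1_hi : (∏ i, (((nu a y i : ℝ) + 1) / y i)) ≤ Phi :=
    Finset.prod_le_prod (fun i _ => div_nonneg (by positivity) (le_of_lt (hypos i))) (fun i _ => hp1_hi i)
  have hPlononneg : (0:ℝ) ≤ Plo := Finset.prod_nonneg (fun i _ => hlo_nonneg i)
  have hdiv : f y / (∏ i, y i) ≤ (∏ i, ((nu a y i : ℝ) / y i)) * f a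
      + M * ((∏ i, (((nu a y i : ℝ) + 1) / y i)) - ∏ i, ((nu a y i : ℝ) / y i)) := by
    rw [div_le_iff₀ hYpos]
    calc f y ≤ (∏ i, (nu a y i : ℝ)) * f a
        + M * ((∏ i, ((nu a y i : ℝ) + 1)) - ∏ i, (nu a y i : ℝ)) := main'
      _ = ((∏ i, ((nu a y i : ℝ) / y i)) * f a
          + M * ((∏ i, (((nu a y i : ℝ) + 1) / y i)) - ∏ i, ((nu a y i : ℝ) / y i)))
          * ∏ i, y i := by rw [hNfact, hPfact]; ring
  have hmain2 : (∏ i, ((nu a y i : ℝ) / y i)) * f a ≤ f a * Phi + |f a| * (Phi - Plo) := by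
    rcases abs_cases (f a) with ⟨habs, hsign⟩ | ⟨habs, hsign⟩
    · rw [habs]
      nlinarith [hprod_hi, hPloPhi]
    · rw [habs]
      nlinarith [hprod_lo, hPloPhi]
  have herr : M * ((∏ i, (((nu a y i : ℝ) + 1) / y i)) - ∏ i, ((nu a y i : ℝ) / y i))
      ≤ M * (Phi - Plo) := by
    apply mul_le_mul_of_nonneg_left _ hM0
    linarith [hprod1_hi, hprod_lo]
  have hPhiinv : f a * Phi = f a / ∏ i, a i := by
    rw [hPhi]
    rw [show (∏ i, (1 / a i : ℝ)) = (∏ i, a i)⁻¹ by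
      rw [← Finset.prod_inv_distrib]; exact Finset.prod_congr rfl (fun i _ => one_div _)]
    rw [div_eq_mul_inv]
  have hfin : C * (Phi - Plo) < ε := hR2
  calc f y / (∏ i, y i) ≤ _ := hdiv
    _ ≤ (f a * Phi + |f a| * (Phi - Plo)) + M * (Phi - Plo) := add_le_add hmain2 herr
    _ = f a / ∏ i, a i + C * (Phi - Plo) := by rw [hPhiinv, hCdef]; ring
    _ ≤ f a / ∏ i, a i + ε := add_le_add_right (le_of_lt hfin) _

include hf in
private lemma curve_lemma {α : Type*} {F : Filter α}
    (hmeas : AEMeasurable f (volume.restrict {x : Fin d → ℝ | ∀ i, 0 < x i}))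
    (y : α → Fin d → ℝ) (hy : ∀ i, Tendsto (fun t => y t i) F atTop) :
    Tendsto (fun t => ((f (y t) / ∏ i, y t i : ℝ) : EReal)) F
      (𝓝 (⨅ x ∈ {x : Fin d → ℝ | ∀ i, 0 < x i}, ((f x / ∏ i, x i : ℝ) : EReal))) := by
  classical
  set v : (Fin d → ℝ) → EReal := fun x => ((f x / ∏ i, x i : ℝ) : EReal) with hv
  set L : EReal := ⨅ x ∈ {x : Fin d → ℝ | ∀ i, 0 < x i}, v x with hL
  rw [tendsto_order]
  constructor
  · intro b hb
    have hpos : ∀ᶠ t in F, ∀ i, (1:ℝ) ≤ y t i :=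
      eventually_all.2 (fun i => (hy i).eventually_ge_atTop 1)
    filter_upwards [hpos] with t ht
    have hmem : y t ∈ {x : Fin d → ℝ | ∀ i, 0 < x i} :=
      fun i => lt_of_lt_of_le zero_lt_one (ht i)
    exact lt_of_lt_of_le hb (iInf₂_le (y t) hmem)
  · intro b hb
    obtain ⟨x₀, hx₀⟩ : ∃ x₀, (⨅ (_ : x₀ ∈ {x : Fin d → ℝ | ∀ i, 0 < x i}), v x₀) < b :=
      iInf_lt_iff.1 hb
    have hx₀O : x₀ ∈ {x : Fin d → ℝ | ∀ i, 0 < x i} := by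
      by_contra hc
      rw [iInf_neg hc] at hx₀
      exact absurd hx₀ (not_lt.2 le_top)
    rw [iInf_pos hx₀O] at hx₀
    obtain ⟨c, hc1, hc2⟩ := exists_between hx₀
    have hcnt : c ≠ ⊤ := ne_top_of_lt hc2
    have hcnb : c ≠ ⊥ := ne_bot_of_gt hc1
    set q : ℝ := c.toReal with hq
    have hqc : (q : EReal) = c := EReal.coe_toReal hcnt hcnb
    have hεpos : 0 < q - f x₀ / ∏ i, x₀ i := by
      have : ((f x₀ / ∏ i, x₀ i : ℝ) : EReal) < (q : EReal) := by rw [hqc]; exact hc1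
      have := EReal.coe_lt_coe_iff.1 this
      linarith
    obtain ⟨R, hR⟩ := key_lemma f hf hmeas x₀ hx₀O hεpos
    have hev : ∀ᶠ t in F, ∀ i, R ≤ y t i :=
      eventually_all.2 (fun i => (hy i).eventually_ge_atTop R)
    filter_upwards [hev] with t ht
    have hle : f (y t) / ∏ i, y t i ≤ q := by
      have := hR (y t) ht
      linarith
    calc (↑(f (y t) / ∏ i, y t i) : EReal) ≤ (q : EReal) := EReal.coe_le_coe_iff.2 hle
      _ = c := hqc
      _ < b := hc2

end FeketeAux

/-- Let `f` be componentwise subadditive and Lebesgue measurable on the positive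
orthant of `ℝ^d`, and for each coordinate `i` let `t ↦ uᵢ t` (with `t` ranging over
the positive reals) and `n ↦ vᵢ n` (with `n` ranging over the positive integers) be
positive-valued functions tending to `+∞`.  Then
`f(u₁(t),…,u_d(t))/(u₁(t)⋯u_d(t))` converges as `t → +∞`, in `ℝ ∪ {−∞}`, to
`inf_{x₁,…,x_d > 0} f(x₁,…,x_d)/(x₁⋯x_d)`, and likewise along the positive
integers. -/
theorem fekete_lemma_along_curves
    (d : ℕ) (hd : 1 ≤ d) (f : (Fin d → ℝ) → ℝ)
    (hf : ∀ (i : Fin d) (x : Fin d → ℝ) (y : ℝ), (∀ j, 0 < x j) → 0 < y →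
      f (Function.update x i (x i + y)) ≤ f x + f (Function.update x i y))
    (hmeas : AEMeasurable f (volume.restrict {x : Fin d → ℝ | ∀ i, 0 < x i}))
    (u : Fin d → ℝ → ℝ) (hupos : ∀ i t, 0 < t → 0 < u i t)
    (hu : ∀ i, Tendsto (u i) atTop atTop)
    (v : Fin d → ℕ → ℝ) (hvpos : ∀ i n, 0 < n → 0 < v i n)
    (hv : ∀ i, Tendsto (v i) atTop atTop) :
    Tendsto (fun t : ℝ => ((f (fun i => u i t) / ∏ i, u i t : ℝ) : EReal)) atTop
      (𝓝 (⨅ x ∈ {x : Fin d → ℝ | ∀ i, 0 < x i},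
        ((f x / ∏ i, x i : ℝ) : EReal))) ∧
    Tendsto (fun n : ℕ => ((f (fun i => v i n) / ∏ i, v i n : ℝ) : EReal)) atTop
      (𝓝 (⨅ x ∈ {x : Fin d → ℝ | ∀ i, 0 < x i},
        ((f x / ∏ i, x i : ℝ) : EReal))) := by
  constructor
  · exact curve_lemma f hf hmeas (fun t i => u i t) (fun i => hu i)
  · exact curve_lemma f hf hmeas (fun n i => v i n) (fun i => hv i)
end
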